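/- arXiv:2103.05570 — 5 statements merged into one kernel-verified Lean document; each statement's English description precedes it below -/
import Mathlib

section
/- Let (ξ_j) be independent Bernoulli random variables with P(ξ_j = 1) = p_j, and let T_n be the trial on which the n-th failure occurs (i.e., T_n = inf{k : Σ_{i=1}^k (1 - ξ_i) = n}). If T_n is almost surely finite, then E[Σ_{j=1}^{T_n} ξ_j] = E[Σ_{j=1}^{T_n} p_j]. -/
open MeasureTheory ProbabilityTheory Finset
open scoped ENNReal NNReal

/-- Discrete intermediate value: a counting process starting at 0 with unit steps
hits `n` by time `j` iff its value at `j` is at least `n`. -/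
lemma wald_nat_ivt (c : ℕ → ℕ) (h0 : c 0 = 0) (hstep : ∀ k, c (k + 1) ≤ c k + 1)
    (hmono : Monotone c) (n j : ℕ) : (∃ k, k ≤ j ∧ c k = n) ↔ n ≤ c j := by
  constructor
  · rintro ⟨k, hk, rfl⟩; exact hmono hk
  · induction j with
    | zero => intro h; exact ⟨0, le_rfl, by omega⟩
    | succ j ih =>
      intro h
      by_cases h' : n ≤ c j
      · obtain ⟨k, hk, hck⟩ := ih h'
        exact ⟨k, hk.trans (Nat.le_succ j), hck⟩
      · exact ⟨j + 1, le_rfl, by have := hstep j; omega⟩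

theorem wald_bernoulli
    {Ω : Type*} [MeasurableSpace Ω] (μ : Measure Ω) [IsProbabilityMeasure μ]
    (p : ℕ → ℝ) (hp : ∀ i, p i ∈ Set.Ioo (0:ℝ) 1)
    (ξ : ℕ → Ω → ℝ) (hmeas : ∀ i, Measurable (ξ i))
    (hval : ∀ i ω, ξ i ω = 0 ∨ ξ i ω = 1)
    (hind : iIndepFun ξ μ)
    (hmean : ∀ i, ∫ ω, ξ i ω ∂μ = p i)
    (n : ℕ) (T : Ω → ℕ) (hTmeas : Measurable T)
    (hT : ∀ ω, T ω = sInf {k : ℕ | ∑ i ∈ Finset.range k, (1 - ξ i ω) = (n:ℝ)})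
    (hfin : ∀ᵐ ω ∂μ, ∃ k : ℕ, ∑ i ∈ Finset.range k, (1 - ξ i ω) = (n:ℝ))
    (hTint : Integrable (fun ω => (T ω : ℝ)) μ) :
    ∫ ω, (∑ j ∈ Finset.range (T ω), ξ j ω) ∂μ =
      ∫ ω, (∑ j ∈ Finset.range (T ω), p j) ∂μ := by
  classical
  -- the counting process of failures
  set c : Ω → ℕ → ℕ := fun ω k => ((Finset.range k).filter (fun i => ξ i ω = 0)).card with hc
  have hsum : ∀ ω k, ∑ i ∈ Finset.range k, (1 - ξ i ω) = (c ω k : ℝ) := by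
    intro ω k
    rw [hc]
    simp only
    rw [← Finset.sum_boole]
    refine Finset.sum_congr rfl fun i _ => ?_
    rcases hval i ω with h | h <;> simp [h]
  have hcmono : ∀ ω, Monotone (c ω) := by
    intro ω a b hab
    exact Finset.card_le_card (Finset.filter_subset_filter _ (Finset.range_subset_range.mpr hab))
  have hcstep : ∀ ω k, c ω (k + 1) ≤ c ω k + 1 := by
    intro ω k
    rw [hc]
    simp only [Finset.range_add_one, Finset.filter_insert]
    split
    · exact Finset.card_insert_le _ _
    · omega
  have hc0 : ∀ ω, c ω 0 = 0 := fun ω => by simp [hc]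
  -- pointwise characterization of `{j < T}`
  have hTiff : ∀ ω, (∃ k, ∑ i ∈ Finset.range k, (1 - ξ i ω) = (n:ℝ)) →
      ∀ j, (j < T ω ↔ ∑ i ∈ Finset.range j, (1 - ξ i ω) < (n:ℝ)) := by
    intro ω hne j
    have hne' : {k : ℕ | ∑ i ∈ Finset.range k, (1 - ξ i ω) = (n:ℝ)}.Nonempty := hne
    have hTle : T ω ≤ j ↔ ∃ k, k ≤ j ∧ ∑ i ∈ Finset.range k, (1 - ξ i ω) = (n:ℝ) := by
      rw [hT ω]
      constructor
      · intro h
        exact ⟨_, h, Nat.sInf_mem hne'⟩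
      · rintro ⟨k, hk, hks⟩
        exact le_trans (Nat.sInf_le hks) hk
    have hiff : (∃ k, k ≤ j ∧ ∑ i ∈ Finset.range k, (1 - ξ i ω) = (n:ℝ)) ↔
        (n:ℝ) ≤ ∑ i ∈ Finset.range j, (1 - ξ i ω) := by
      simp only [hsum ω, Nat.cast_inj, Nat.cast_le]
      constructor
      · rintro ⟨k, hk, hck⟩
        exact (wald_nat_ivt (c ω) (hc0 ω) (hcstep ω) (hcmono ω) n j).1 ⟨k, hk, hck⟩
      · intro h
        obtain ⟨k, hk, hck⟩ := (wald_nat_ivt (c ω) (hc0 ω) (hcstep ω) (hcmono ω) n j).2 h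
        exact ⟨k, hk, hck⟩
    rw [← not_le, hTle, hiff, not_le]
  -- the summands
  set f : ℕ → Ω → ℝ := fun j ω => if j < T ω then ξ j ω else 0 with hf
  set g : ℕ → Ω → ℝ := fun j ω => if j < T ω then p j else 0 with hg
  have hfmeas : ∀ j, Measurable (f j) := fun j =>
    Measurable.ite (hTmeas measurableSet_Ioi) (hmeas j) measurable_const
  have hgmeas : ∀ j, Measurable (g j) := fun j =>
    Measurable.ite (hTmeas measurableSet_Ioi) measurable_const measurable_const
  have hfsum : ∀ ω, ∑ j ∈ Finset.range (T ω), ξ j ω = ∑' j, f j ω := by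
    intro ω
    rw [tsum_eq_sum (s := Finset.range (T ω))
      (fun b hb => if_neg (by simpa using hb))]
    exact Finset.sum_congr rfl fun i hi => (if_pos (Finset.mem_range.mp hi)).symm
  have hgsum : ∀ ω, ∑ j ∈ Finset.range (T ω), p j = ∑' j, g j ω := by
    intro ω
    rw [tsum_eq_sum (s := Finset.range (T ω))
      (fun b hb => if_neg (by simpa using hb))]
    exact Finset.sum_congr rfl fun i hi => (if_pos (Finset.mem_range.mp hi)).symm
  -- finiteness of ∫⁻ T
  have hTlint : ∫⁻ ω, (T ω : ℝ≥0∞) ∂μ < ⊤ := by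
    have h2 : ∫⁻ ω, (‖(T ω : ℝ)‖₊ : ℝ≥0∞) ∂μ < ⊤ := hTint.hasFiniteIntegral
    simpa using h2
  have htsumT : ∀ m : ℕ, ∑' j : ℕ, (if j < m then (1:ENNReal) else 0) = m := by
    intro m
    rw [tsum_eq_sum (s := Finset.range m) (fun b hb => if_neg (by simpa using hb))]
    rw [show ∑ j ∈ Finset.range m, (if j < m then (1:ENNReal) else 0)
        = ∑ j ∈ Finset.range m, (1:ENNReal) from
      Finset.sum_congr rfl fun i hi => if_pos (Finset.mem_range.mp hi)]
    simp
  have key2 : ∑' j : ℕ, ∫⁻ ω, (if j < T ω then (1:ENNReal) else 0) ∂μ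
      = ∫⁻ ω, (T ω : ℝ≥0∞) ∂μ := by
    rw [← lintegral_tsum (f := fun j ω => if j < T ω then (1:ENNReal) else 0) (fun j =>
      (Measurable.ite (p := fun ω => j < T ω) (hTmeas measurableSet_Ioi) measurable_const
        measurable_const).aemeasurable)]
    exact lintegral_congr fun ω => htsumT (T ω)
  have hbound : ∀ (F : ℕ → Ω → ℝ), (∀ j ω, j < T ω → ‖F j ω‖₊ ≤ 1) →
      (∀ j ω, ¬ j < T ω → F j ω = 0) →
      ∑' j, ∫⁻ ω, (‖F j ω‖₊ : ℝ≥0∞) ∂μ ≠ ⊤ := by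
    intro F h1 h0
    have hle : ∀ j, ∫⁻ ω, (‖F j ω‖₊ : ℝ≥0∞) ∂μ
        ≤ ∫⁻ ω, (if j < T ω then (1:ENNReal) else 0) ∂μ := by
      intro j
      refine lintegral_mono fun ω => ?_
      by_cases h : j < T ω
      · simp only [if_pos h]
        exact_mod_cast h1 j ω h
      · simp [h0 j ω h]
    exact ne_of_lt (lt_of_le_of_lt (ENNReal.tsum_le_tsum hle) (key2 ▸ hTlint))
  have hfbound : ∑' j, ∫⁻ ω, (‖f j ω‖₊ : ℝ≥0∞) ∂μ ≠ ⊤ := by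
    refine hbound f (fun j ω h => ?_) (fun j ω h => if_neg h)
    rw [hf]; simp only [if_pos h]
    rcases hval j ω with h' | h' <;> simp [h']
  have hgbound : ∑' j, ∫⁻ ω, (‖g j ω‖₊ : ℝ≥0∞) ∂μ ≠ ⊤ := by
    refine hbound g (fun j ω h => ?_) (fun j ω h => if_neg h)
    rw [hg]; simp only [if_pos h]
    have := (hp j).1; have := (hp j).2
    rw [← NNReal.coe_le_coe]
    rw [coe_nnnorm, Real.norm_eq_abs, abs_of_pos (hp j).1]
    exact le_of_lt (hp j).2
  -- termwise equality via independence
  have hterm : ∀ j, ∫ ω, f j ω ∂μ = ∫ ω, g j ω ∂μ := by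
    intro j
    set A : Set Ω := {ω | ∑ i ∈ Finset.range j, (1 - ξ i ω) < (n:ℝ)} with hA
    have hAmeas : MeasurableSet A := by
      apply measurableSet_lt
      · exact Finset.measurable_sum _ fun i _ => measurable_const.sub (hmeas i)
      · exact measurable_const
    have hae : ∀ᵐ ω ∂μ, (j < T ω ↔ ω ∈ A) := by
      filter_upwards [hfin] with ω hω
      exact hTiff ω hω j
    set X : Ω → ℝ := fun ω => if ω ∈ A then 1 else 0 with hX
    have hXmeas : Measurable X := Measurable.ite hAmeas measurable_const measurable_const
    have hXind : IndepFun X (ξ j) μ := by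
      have h1 := hind.indepFun_finset (Finset.range j) {j} (by simp) hmeas
      have hφ : Measurable (fun v : (↥(Finset.range j) → ℝ) =>
          if (∑ i : ↥(Finset.range j), (1 - v i)) < (n:ℝ) then (1:ℝ) else 0) := by
        refine Measurable.ite ?_ measurable_const measurable_const
        exact measurableSet_lt
          (Finset.measurable_sum _ fun i _ => measurable_const.sub (measurable_pi_apply i))
          measurable_const
      have hψ : Measurable (fun v : (↥({j} : Finset ℕ) → ℝ) =>
          v ⟨j, Finset.mem_singleton_self j⟩) := measurable_pi_apply _
      have h2 := h1.comp hφ hψ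
      have e1 : (fun v : (↥(Finset.range j) → ℝ) =>
          if (∑ i : ↥(Finset.range j), (1 - v i)) < (n:ℝ) then (1:ℝ) else 0) ∘
          (fun ω (i : ↥(Finset.range j)) => ξ i ω) = X := by
        funext ω
        simp only [Function.comp_apply, hX, hA, Set.mem_setOf_eq]
        rw [Finset.sum_coe_sort (Finset.range j) (fun i => 1 - ξ i ω)]
      have e2 : (fun v : (↥({j} : Finset ℕ) → ℝ) => v ⟨j, Finset.mem_singleton_self j⟩) ∘
          (fun ω (i : ↥({j} : Finset ℕ)) => ξ i ω) = ξ j := rfl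
      rw [e1, e2] at h2
      exact h2
    have hXint : ∫ ω, X ω ∂μ = (μ A).toReal := by
      rw [hX]
      rw [show (fun ω => if ω ∈ A then (1:ℝ) else 0) = A.indicator (fun _ => (1:ℝ)) from
        funext fun ω => (Set.indicator_apply A (fun _ => (1:ℝ)) ω).symm]
      rw [integral_indicator_const _ hAmeas]
      simp [measureReal_def]
    have hL : ∫ ω, f j ω ∂μ = (μ A).toReal * p j := by
      have step : ∫ ω, f j ω ∂μ = ∫ ω, (X * ξ j) ω ∂μ := by
        refine integral_congr_ae ?_
        filter_upwards [hae] with ω hω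
        by_cases h : j < T ω
        · simp [hf, hX, h, hω.mp h]
        · have hA' : ω ∉ A := fun hA'' => h (hω.mpr hA'')
          simp [hf, hX, h, hA']
      rw [step, hXind.integral_mul_eq_mul_integral hXmeas.aestronglyMeasurable (hmeas j).aestronglyMeasurable,
        hXint, hmean j]
    have hR : ∫ ω, g j ω ∂μ = (μ A).toReal * p j := by
      have step : ∫ ω, g j ω ∂μ = ∫ ω, A.indicator (fun _ => p j) ω ∂μ := by
        refine integral_congr_ae ?_
        filter_upwards [hae] with ω hω
        by_cases h : ω ∈ A
        · simp [hg, Set.indicator_of_mem h, hω.mpr h]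
        · have h' : ¬ j < T ω := fun h'' => h (hω.mp h'')
          simp [hg, Set.indicator_of_notMem h, h']
      rw [step, integral_indicator_const _ hAmeas, smul_eq_mul, measureReal_def]
    rw [hL, hR]
  -- put everything together
  calc ∫ ω, (∑ j ∈ Finset.range (T ω), ξ j ω) ∂μ
      = ∫ ω, ∑' j, f j ω ∂μ := integral_congr_ae (Filter.Eventually.of_forall fun ω => hfsum ω)
    _ = ∑' j, ∫ ω, f j ω ∂μ :=
        integral_tsum (fun j => (hfmeas j).aestronglyMeasurable) hfbound
    _ = ∑' j, ∫ ω, g j ω ∂μ := tsum_congr hterm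
    _ = ∫ ω, ∑' j, g j ω ∂μ :=
        (integral_tsum (fun j => (hgmeas j).aestronglyMeasurable) hgbound).symm
    _ = ∫ ω, (∑ j ∈ Finset.range (T ω), p j) ∂μ :=
        integral_congr_ae (Filter.Eventually.of_forall fun ω => (hgsum ω).symm)
end

section
/- Let (ξ_i) be independent Bernoulli(p_i) random variables where the partial sums δ_k = Σ_{i=1}^k (2p_i - 1) are uniformly bounded. Let Z_1 count the number of successes before the n-th failure, i.e., Z_1 = Σ_{k=1}^{T_n} ξ_k where T_n is the trial of the n-th failure. Then there is a constant C > 0 (depending only on sup_k |δ_k|) such that for all ε > 0 and all sufficiently large n, P(|Z_1/n - 1| > ε) ≤ 2 exp(-C ε² n / (2 + ε)). -/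
open MeasureTheory ProbabilityTheory Finset Filter






section Chernoff

variable {Ω : Type*} [MeasurableSpace Ω] (μ : Measure Ω) [IsProbabilityMeasure μ]
    (p : ℕ → ℝ) (hp : ∀ i, p i ∈ Set.Ioo (0:ℝ) 1)
    (ξ : ℕ → Ω → ℝ) (hmeas : ∀ i, Measurable (ξ i))
    (hval : ∀ i ω, ξ i ω = 0 ∨ ξ i ω = 1)
    (hind : iIndepFun ξ μ)
    (hmean : ∀ i, ∫ ω, ξ i ω ∂μ = p i)

include hval hmeas in
lemma int_exp_sum (t : ℝ) (m : ℕ) :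
    Integrable (fun ω => Real.exp (t * (∑ i ∈ Finset.range m, ξ i) ω)) μ := by
  apply Integrable.mono' (integrable_const (Real.exp (|t| * m)))
  · have : Measurable fun ω => (∑ i ∈ Finset.range m, ξ i) ω := by
      simp only [Finset.sum_apply]
      exact Finset.measurable_sum (Finset.range m) (fun i _ => hmeas i)
    exact ((this.const_mul t).exp).aestronglyMeasurable
  · refine ae_of_all _ fun ω => ?_
    have hS0 : 0 ≤ (∑ i ∈ Finset.range m, ξ i) ω := by
      rw [Finset.sum_apply]
      exact Finset.sum_nonneg fun i _ => by rcases hval i ω with h | h <;> simp [h]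
    have hSm : (∑ i ∈ Finset.range m, ξ i) ω ≤ m := by
      rw [Finset.sum_apply]
      calc ∑ i ∈ Finset.range m, ξ i ω ≤ ∑ i ∈ Finset.range m, 1 :=
            Finset.sum_le_sum fun i _ => by rcases hval i ω with h | h <;> simp [h]
        _ = m := by simp
    rw [Real.norm_eq_abs, abs_of_pos (Real.exp_pos _), Real.exp_le_exp]
    calc t * (∑ i ∈ Finset.range m, ξ i) ω ≤ |t| * (∑ i ∈ Finset.range m, ξ i) ω := by
          exact mul_le_mul_of_nonneg_right (le_abs_self t) hS0
      _ ≤ |t| * m := mul_le_mul_of_nonneg_left hSm (abs_nonneg t)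

include hval hmeas hmean in
lemma mgf_xi (i : ℕ) (t : ℝ) : mgf (ξ i) μ t = 1 + (Real.exp t - 1) * p i := by
  have hint : Integrable (ξ i) μ := by
    apply Integrable.mono' (integrable_const (1:ℝ))
    · exact (hmeas i).aestronglyMeasurable
    · exact ae_of_all _ fun ω => by rcases hval i ω with h | h <;> simp [h]
  have heq : (fun ω => Real.exp (t * ξ i ω)) = fun ω => 1 + (Real.exp t - 1) * ξ i ω := by
    funext ω
    rcases hval i ω with h | h <;> simp [h]
  rw [mgf, heq, integral_add (integrable_const _) (hint.const_mul _), integral_const,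
    integral_const_mul, hmean i]
  simp

include hp hval hmeas hmean hind in
lemma mgf_sum_le (t : ℝ) (m : ℕ) :
    mgf (∑ i ∈ Finset.range m, ξ i) μ t
      ≤ Real.exp ((Real.exp t - 1) * ∑ i ∈ Finset.range m, p i) := by
  rw [hind.mgf_sum hmeas (Finset.range m)]
  calc ∏ i ∈ Finset.range m, mgf (ξ i) μ t
      = ∏ i ∈ Finset.range m, (1 + (Real.exp t - 1) * p i) := by
        exact Finset.prod_congr rfl fun i _ => mgf_xi μ p ξ hmeas hval hmean i t
    _ ≤ ∏ i ∈ Finset.range m, Real.exp ((Real.exp t - 1) * p i) := by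
        refine Finset.prod_le_prod (fun i _ => ?_) (fun i _ => ?_)
        · have h1 := (hp i).1; have h2 := (hp i).2
          nlinarith [Real.exp_pos t]
        · have := Real.add_one_le_exp ((Real.exp t - 1) * p i)
          linarith
    _ = Real.exp ((Real.exp t - 1) * ∑ i ∈ Finset.range m, p i) := by
        rw [← Real.exp_sum, Finset.mul_sum]

include hp hval hmeas hmean hind in
lemma chernoff_up (m : ℕ) (a t : ℝ) (ht : 0 ≤ t) :
    (μ {ω | a ≤ ∑ i ∈ Finset.range m, ξ i ω}).toReal
      ≤ Real.exp (-t * a + (Real.exp t - 1) * ∑ i ∈ Finset.range m, p i) := by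
  have hset : {ω | a ≤ ∑ i ∈ Finset.range m, ξ i ω}
      = {ω | a ≤ (∑ i ∈ Finset.range m, ξ i) ω} := by
    ext ω; simp [Finset.sum_apply]
  rw [hset]
  calc (μ {ω | a ≤ (∑ i ∈ Finset.range m, ξ i) ω}).toReal
      ≤ Real.exp (-t * a) * mgf (∑ i ∈ Finset.range m, ξ i) μ t :=
        measure_ge_le_exp_mul_mgf a ht (int_exp_sum μ ξ hmeas hval t m)
    _ ≤ Real.exp (-t * a) * Real.exp ((Real.exp t - 1) * ∑ i ∈ Finset.range m, p i) := by
        exact mul_le_mul_of_nonneg_left (mgf_sum_le μ p hp ξ hmeas hval hind hmean t m)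
          (Real.exp_pos _).le
    _ = Real.exp (-t * a + (Real.exp t - 1) * ∑ i ∈ Finset.range m, p i) := by
        rw [← Real.exp_add]

include hp hval hmeas hmean hind in
lemma chernoff_low (m : ℕ) (a t : ℝ) (ht : 0 ≤ t) :
    (μ {ω | ∑ i ∈ Finset.range m, ξ i ω ≤ a}).toReal
      ≤ Real.exp (t * a + (Real.exp (-t) - 1) * ∑ i ∈ Finset.range m, p i) := by
  have hset : {ω | ∑ i ∈ Finset.range m, ξ i ω ≤ a}
      = {ω | (∑ i ∈ Finset.range m, ξ i) ω ≤ a} := by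
    ext ω; simp [Finset.sum_apply]
  rw [hset]
  calc (μ {ω | (∑ i ∈ Finset.range m, ξ i) ω ≤ a}).toReal
      ≤ Real.exp (-(-t) * a) * mgf (∑ i ∈ Finset.range m, ξ i) μ (-t) :=
        measure_le_le_exp_mul_mgf a (neg_nonpos.mpr ht) (int_exp_sum μ ξ hmeas hval (-t) m)
    _ ≤ Real.exp (t * a) * Real.exp ((Real.exp (-t) - 1) * ∑ i ∈ Finset.range m, p i) := by
        rw [neg_neg]
        exact mul_le_mul_of_nonneg_left (mgf_sum_le μ p hp ξ hmeas hval hind hmean (-t) m)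
          (Real.exp_pos _).le
    _ = Real.exp (t * a + (Real.exp (-t) - 1) * ∑ i ∈ Finset.range m, p i) := by
        rw [← Real.exp_add]

end Chernoff


lemma det_incl {Ω : Type*} (ξ : ℕ → Ω → ℝ) (hval : ∀ i ω, ξ i ω = 0 ∨ ξ i ω = 1)
    (n : ℕ) (hn : 1 ≤ n) (ε : ℝ) (hε : 0 < ε)
    (mp mm : ℕ) (hmp : (mp : ℝ) ≤ (2 + ε) * n) (hmm : (2 - ε) * n ≤ (mm : ℝ))
    (ω : Ω) (Tv : ℕ)
    (hTv : Tv = sInf {k : ℕ | ∑ i ∈ Finset.range k, (1 - ξ i ω) = (n : ℝ)})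
    (hA : ε < |(∑ k ∈ Finset.range Tv, ξ k ω) / n - 1|) :
    ((mp : ℝ) - n + 1 ≤ ∑ i ∈ Finset.range mp, ξ i ω) ∨
      (ε < 1 ∧ ∑ i ∈ Finset.range mm, ξ i ω ≤ (mm : ℝ) - n) := by
  have hnR : (0 : ℝ) < n := by exact_mod_cast hn
  set f : ℕ → ℕ := fun k => ∑ i ∈ Finset.range k, if ξ i ω = 1 then 0 else 1 with hf
  have hcast : ∀ k, ((f k : ℝ)) = ∑ i ∈ Finset.range k, (1 - ξ i ω) := by
    intro k
    rw [hf]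
    push_cast
    refine Finset.sum_congr rfl fun i _ => ?_
    rcases hval i ω with h | h <;> simp [h]
  have hS : ∀ k, ∑ i ∈ Finset.range k, ξ i ω = (k : ℝ) - f k := by
    intro k
    have h1 := hcast k
    rw [Finset.sum_sub_distrib, Finset.sum_const, Finset.card_range] at h1
    simp only [nsmul_eq_mul, mul_one] at h1
    linarith
  have hmono : Monotone f := by
    apply monotone_nat_of_le_succ
    intro k
    rw [hf]
    simp only [Finset.sum_range_succ]
    exact Nat.le_add_right _ _
  have hstep : ∀ k, f (k + 1) ≤ f k + 1 := by
    intro k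
    rw [hf]
    simp only [Finset.sum_range_succ]
    gcongr
    split <;> omega
  have hivt : ∀ m, n ≤ f m → ∃ k, f k = n := by
    intro m
    induction m with
    | zero => intro h; simp [hf] at h; exact ⟨0, by simp [hf]; omega⟩
    | succ m ih =>
      intro h
      by_cases h' : n ≤ f m
      · exact ih h'
      · exact ⟨m + 1, by have := hstep m; omega⟩
  have hEset : {k : ℕ | ∑ i ∈ Finset.range k, (1 - ξ i ω) = (n : ℝ)} = {k | f k = n} := by
    ext k
    simp only [Set.mem_setOf_eq, ← hcast k, Nat.cast_inj]
  rw [hEset] at hTv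
  have hZ := hS Tv
  -- the "left disjunct" helper from f mp < n
  have hleft : f mp < n → ((mp : ℝ) - n + 1 ≤ ∑ i ∈ Finset.range mp, ξ i ω) := by
    intro h
    have h1 : f mp + 1 ≤ n := h
    have : ((f mp : ℝ)) + 1 ≤ (n : ℝ) := by exact_mod_cast h1
    rw [hS mp]
    linarith
  rcases lt_abs.mp hA with hup | hlo
  · -- upper tail
    left
    have hZbig : (1 + ε) * n < ∑ k ∈ Finset.range Tv, ξ k ω := by
      have := (lt_div_iff₀ hnR).mp (by linarith : 1 + ε < (∑ k ∈ Finset.range Tv, ξ k ω) / n)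
      linarith
    have hne : {k | f k = n}.Nonempty := by
      by_contra h
      rw [Set.not_nonempty_iff_eq_empty] at h
      rw [h, Nat.sInf_empty] at hTv
      rw [hTv] at hZbig
      simp at hZbig
      nlinarith
    have hfT : f Tv = n := by rw [hTv]; exact Nat.sInf_mem hne
    have hTbig : (mp : ℝ) < (Tv : ℝ) := by
      have : (Tv : ℝ) = (∑ k ∈ Finset.range Tv, ξ k ω) + n := by
        rw [hZ, hfT]; ring
      nlinarith
    have hTbigN : mp < Tv := by exact_mod_cast hTbig
    have hne2 : f mp ≠ n := by
      intro h
      have : Tv ≤ mp := hTv ▸ Nat.sInf_le h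
      omega
    have hle2 : f mp ≤ n := hfT ▸ hmono hTbigN.le
    exact hleft (by omega)
  · -- lower tail
    have hZ0 : 0 ≤ ∑ k ∈ Finset.range Tv, ξ k ω :=
      Finset.sum_nonneg fun i _ => by rcases hval i ω with h | h <;> simp [h]
    have hε1 : ε < 1 := by
      have : (∑ k ∈ Finset.range Tv, ξ k ω) / n ≥ 0 := by positivity
      linarith
    have hZsmall : ∑ k ∈ Finset.range Tv, ξ k ω < (1 - ε) * n := by
      have := (div_lt_iff₀ hnR).mp (by linarith : (∑ k ∈ Finset.range Tv, ξ k ω) / n < 1 - ε)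
      linarith
    by_cases hne : {k | f k = n}.Nonempty
    · right
      refine ⟨hε1, ?_⟩
      have hfT : f Tv = n := by rw [hTv]; exact Nat.sInf_mem hne
      have hTsmall : (Tv : ℝ) < (mm : ℝ) := by
        have : (Tv : ℝ) = (∑ k ∈ Finset.range Tv, ξ k ω) + n := by
          rw [hZ, hfT]; ring
        nlinarith
      have hTle : Tv ≤ mm := by
        have : Tv < mm := by exact_mod_cast hTsmall
        omega
      have hge : n ≤ f mm := hfT ▸ hmono hTle
      have : (n : ℝ) ≤ (f mm : ℝ) := by exact_mod_cast hge
      rw [hS mm]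
      linarith
    · left
      rw [Set.not_nonempty_iff_eq_empty] at hne
      have hno : ∀ k, f k ≠ n := by
        intro k h
        have : k ∈ ({k | f k = n} : Set ℕ) := h
        rw [hne] at this
        exact this
      refine hleft ?_
      by_contra h
      push_neg at h
      obtain ⟨k, hk⟩ := hivt mp h
      exact hno k hk


lemma exp_quad_upper {t : ℝ} (h0 : 0 ≤ t) (h1 : t ≤ 1) :
    Real.exp t ≤ 1 + t + (3/4) * t^2 := by
  have h := Real.exp_bound' h0 h1 (n := 2) (by norm_num)
  simp [Finset.sum_range_succ, Nat.factorial] at h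
  nlinarith [h]

lemma exp_neg_quad {t : ℝ} (h0 : 0 ≤ t) : Real.exp (-t) ≤ 1 - t + t^2 := by
  have h1 := Real.add_one_le_exp t
  have h2 := Real.exp_pos t
  rw [Real.exp_neg, inv_eq_one_div, div_le_iff₀ h2]
  nlinarith [sq_nonneg t, sq_nonneg (1 - t)]

lemma numeric_upper (D ε n m M : ℝ) (hD0 : 0 ≤ D) (hε : 0 < ε)
    (hn1 : 4*(D+2) ≤ ε*n) (hn2 : D+2 ≤ n)
    (hm1 : (2+ε)*n - 1 ≤ m) (hm2 : m ≤ (2+ε)*n)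
    (hMl : m - D ≤ 2*M) (hMu : 2*M ≤ m + D) :
    ∃ t : ℝ, 0 ≤ t ∧ -t*(m - n + 1) + (Real.exp t - 1)*M ≤ -(1/256) * ε^2 * n / (2+ε) := by
  have hn0 : 2 ≤ n := by linarith
  have hεn : 0 < ε * n := mul_pos hε (by linarith)
  set s := m - n + 1 - M with hs
  have hs1 : ε*n/4 ≤ s := by simp only [hs]; linarith
  have hM1 : n/2 ≤ M := by linarith
  have hMpos : 0 < M := by linarith
  have hsM : s ≤ M := by simp only [hs]; linarith
  have hspos : 0 < s := by linarith
  refine ⟨s/(3*M), by positivity, ?_⟩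
  have ht0 : 0 ≤ s/(3*M) := by positivity
  have ht1 : s/(3*M) ≤ 1 := by
    rw [div_le_one (by positivity)]
    linarith
  have hexp := exp_quad_upper ht0 ht1
  have hms : m - n + 1 = M + s := by simp only [hs]; ring
  have key : -(s/(3*M))*(m - n + 1) + (Real.exp (s/(3*M)) - 1)*M ≤ -(s^2/(4*M)) := by
    have heq : -(s/(3*M))*(M + s) + ((s/(3*M)) + (3/4)*(s/(3*M))^2)*M = -(s^2/(4*M)) := by
      field_simp
      ring
    calc -(s/(3*M))*(m - n + 1) + (Real.exp (s/(3*M)) - 1)*M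
        ≤ -(s/(3*M))*(M + s) + ((s/(3*M)) + (3/4)*(s/(3*M))^2)*M := by
          rw [hms]
          have : (Real.exp (s/(3*M)) - 1)*M ≤ ((s/(3*M)) + (3/4)*(s/(3*M))^2)*M := by
            apply mul_le_mul_of_nonneg_right _ hMpos.le
            linarith
          linarith
      _ = -(s^2/(4*M)) := heq
  have hs2 : (ε*n/4)^2 ≤ s^2 := by nlinarith
  have hM2 : M ≤ (2+ε)*n := by linarith
  have h2 : (1/256) * ε^2 * n / (2+ε) ≤ s^2/(4*M) := by
    rw [div_le_div_iff₀ (by positivity) (by positivity)]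
    nlinarith [mul_le_mul_of_nonneg_right hs2 (show (0:ℝ) ≤ 2+ε by linarith),
      mul_le_mul_of_nonneg_left hM2 (show (0:ℝ) ≤ ε^2*n by positivity)]
  have h3 : -(s^2/(4*M)) ≤ -(1/256) * ε^2 * n / (2+ε) := by
    have : -(1/256) * ε^2 * n / (2+ε) = -((1/256) * ε^2 * n / (2+ε)) := by ring
    rw [this]
    linarith
  exact key.trans h3

lemma numeric_lower (D ε n m M : ℝ) (hD0 : 0 ≤ D) (hε : 0 < ε) (hε1 : ε < 1)
    (hn1 : 4*(D+2) ≤ ε*n) (hn2 : D+2 ≤ n)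
    (hm1 : (2-ε)*n ≤ m) (hm2 : m ≤ (2-ε)*n + 1)
    (hMl : m - D ≤ 2*M) (hMu : 2*M ≤ m + D) :
    ∃ t : ℝ, 0 ≤ t ∧ t*(m - n) + (Real.exp (-t) - 1)*M ≤ -(1/256) * ε^2 * n / (2+ε) := by
  have hn0 : 2 ≤ n := by linarith
  have hεn : 0 < ε * n := mul_pos hε (by linarith)
  have hen2 : 0 ≤ (1-ε)*n := mul_nonneg (by linarith) (by linarith)
  set s := M - (m - n) with hs
  have hs1 : ε*n/4 ≤ s := by simp only [hs]; linarith
  have hM1 : 1 ≤ M := by linarith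
  have hMpos : 0 < M := by linarith
  have hspos : 0 < s := by linarith
  refine ⟨s/(2*M), by positivity, ?_⟩
  have ht0 : 0 ≤ s/(2*M) := by positivity
  have hexp := exp_neg_quad ht0
  have hms : m - n = M - s := by simp only [hs]; ring
  have key : (s/(2*M))*(m - n) + (Real.exp (-(s/(2*M))) - 1)*M ≤ -(s^2/(4*M)) := by
    have heq : (s/(2*M))*(M - s) + (-(s/(2*M)) + (s/(2*M))^2)*M = -(s^2/(4*M)) := by
      field_simp
      ring
    calc (s/(2*M))*(m - n) + (Real.exp (-(s/(2*M))) - 1)*M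
        ≤ (s/(2*M))*(M - s) + (-(s/(2*M)) + (s/(2*M))^2)*M := by
          rw [hms]
          have : (Real.exp (-(s/(2*M))) - 1)*M ≤ (-(s/(2*M)) + (s/(2*M))^2)*M := by
            apply mul_le_mul_of_nonneg_right _ hMpos.le
            linarith
          linarith
      _ = -(s^2/(4*M)) := heq
  have hs2 : (ε*n/4)^2 ≤ s^2 := by nlinarith
  have hM2 : M ≤ 2*n := by linarith
  have h2 : (1/256) * ε^2 * n / (2+ε) ≤ s^2/(4*M) := by
    rw [div_le_div_iff₀ (by positivity) (by positivity)]
    nlinarith [mul_le_mul_of_nonneg_right hs2 (show (0:ℝ) ≤ 2+ε by linarith),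
      mul_le_mul_of_nonneg_left hM2 (show (0:ℝ) ≤ ε^2*n by positivity)]
  have h3 : -(s^2/(4*M)) ≤ -(1/256) * ε^2 * n / (2+ε) := by
    have : -(1/256) * ε^2 * n / (2+ε) = -((1/256) * ε^2 * n / (2+ε)) := by ring
    rw [this]
    linarith
  exact key.trans h3


theorem concentration_FBLP
    {Ω : Type*} [MeasurableSpace Ω] (μ : Measure Ω) [IsProbabilityMeasure μ]
    (p : ℕ → ℝ) (hp : ∀ i, p i ∈ Set.Ioo (0:ℝ) 1)
    (ξ : ℕ → Ω → ℝ) (hmeas : ∀ i, Measurable (ξ i))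
    (hval : ∀ i ω, ξ i ω = 0 ∨ ξ i ω = 1)
    (hind : iIndepFun ξ μ)
    (hmean : ∀ i, ∫ ω, ξ i ω ∂μ = p i)
    (D : ℝ) (hD : ∀ k : ℕ, |∑ i ∈ Finset.range k, (2 * p i - 1)| ≤ D)
    (T : ℕ → Ω → ℕ)
    (hT : ∀ n ω, T n ω = sInf {k : ℕ | ∑ i ∈ Finset.range k, (1 - ξ i ω) = (n:ℝ)}) :
    ∃ C : ℝ, 0 < C ∧ ∀ ε : ℝ, 0 < ε → ∀ᶠ n : ℕ in atTop,
      (μ {ω | ε < |(∑ k ∈ Finset.range (T n ω), ξ k ω) / n - 1|}).toReal ≤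
        2 * Real.exp (-C * ε^2 * n / (2 + ε)) := by
  refine ⟨1/256, by norm_num, ?_⟩
  intro ε hε
  have hD0 : 0 ≤ D := by simpa using hD 0
  have hcoe : Tendsto (fun n : ℕ => (n : ℝ)) atTop atTop := tendsto_natCast_atTop_atTop
  filter_upwards [hcoe.eventually_ge_atTop (D + 2), hcoe.eventually_ge_atTop (4 * (D + 2) / ε)]
    with n hn2 hn1'
  have hn1 : 4 * (D + 2) ≤ ε * (n : ℝ) := by
    rw [div_le_iff₀ hε] at hn1'
    nlinarith
  have hn0 : (2 : ℝ) ≤ n := by linarith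
  have hnN : 1 ≤ n := by exact_mod_cast (by linarith : (1:ℝ) ≤ (n:ℝ))
  have hdelta : ∀ m : ℕ, ∑ i ∈ Finset.range m, (2 * p i - 1)
      = 2 * (∑ i ∈ Finset.range m, p i) - m := by
    intro m
    rw [Finset.sum_sub_distrib]
    simp [Finset.mul_sum]
  -- upper tail
  set mp := ⌊(2 + ε) * (n : ℝ)⌋₊ with hmp_def
  have hmp2 : (mp : ℝ) ≤ (2 + ε) * n := Nat.floor_le (by positivity)
  have hmp1 : (2 + ε) * (n : ℝ) - 1 ≤ mp := by
    have := Nat.lt_floor_add_one ((2 + ε) * (n : ℝ))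
    linarith
  have hMp : |2 * (∑ i ∈ Finset.range mp, p i) - mp| ≤ D := by
    rw [← hdelta mp]; exact hD mp
  obtain ⟨hMp1, hMp2⟩ := abs_le.mp hMp
  obtain ⟨tp, htp0, htp⟩ := numeric_upper D ε n mp (∑ i ∈ Finset.range mp, p i) hD0 hε hn1 hn2
    hmp1 hmp2 (by linarith) (by linarith)
  have hU : (μ {ω | (mp : ℝ) - n + 1 ≤ ∑ i ∈ Finset.range mp, ξ i ω}).toReal
      ≤ Real.exp (-(1/256) * ε^2 * n / (2 + ε)) := by
    refine le_trans (chernoff_up μ p hp ξ hmeas hval hind hmean mp ((mp : ℝ) - n + 1) tp htp0) ?_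
    exact Real.exp_le_exp.mpr htp
  by_cases hε1 : ε < 1
  · -- both tails
    set mm := ⌈(2 - ε) * (n : ℝ)⌉₊ with hmm_def
    have hmm1 : (2 - ε) * (n : ℝ) ≤ mm := Nat.le_ceil _
    have hmm2 : (mm : ℝ) ≤ (2 - ε) * n + 1 := by
      have := Nat.ceil_lt_add_one (show (0:ℝ) ≤ (2 - ε) * n by
        apply mul_nonneg <;> linarith)
      linarith
    have hMm : |2 * (∑ i ∈ Finset.range mm, p i) - mm| ≤ D := by
      rw [← hdelta mm]; exact hD mm
    obtain ⟨hMm1, hMm2⟩ := abs_le.mp hMm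
    obtain ⟨tm, htm0, htm⟩ := numeric_lower D ε n mm (∑ i ∈ Finset.range mm, p i) hD0 hε hε1
      hn1 hn2 hmm1 hmm2 (by linarith) (by linarith)
    have hL : (μ {ω | ∑ i ∈ Finset.range mm, ξ i ω ≤ (mm : ℝ) - n}).toReal
        ≤ Real.exp (-(1/256) * ε^2 * n / (2 + ε)) := by
      refine le_trans (chernoff_low μ p hp ξ hmeas hval hind hmean mm ((mm : ℝ) - n) tm htm0) ?_
      exact Real.exp_le_exp.mpr htm
    have hsub : {ω | ε < |(∑ k ∈ Finset.range (T n ω), ξ k ω) / n - 1|}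
        ⊆ {ω | (mp : ℝ) - n + 1 ≤ ∑ i ∈ Finset.range mp, ξ i ω}
          ∪ {ω | ∑ i ∈ Finset.range mm, ξ i ω ≤ (mm : ℝ) - n} := by
      intro ω hω
      rcases det_incl ξ hval n hnN ε hε mp mm hmp2 hmm1 ω (T n ω) (hT n ω) hω with h | h
      · exact Or.inl h
      · exact Or.inr h.2
    have hμ : μ {ω | ε < |(∑ k ∈ Finset.range (T n ω), ξ k ω) / n - 1|}
        ≤ μ {ω | (mp : ℝ) - n + 1 ≤ ∑ i ∈ Finset.range mp, ξ i ω}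
          + μ {ω | ∑ i ∈ Finset.range mm, ξ i ω ≤ (mm : ℝ) - n} :=
      le_trans (measure_mono hsub) (measure_union_le _ _)
    have h1 : (μ {ω | ε < |(∑ k ∈ Finset.range (T n ω), ξ k ω) / n - 1|}).toReal
        ≤ (μ {ω | (mp : ℝ) - n + 1 ≤ ∑ i ∈ Finset.range mp, ξ i ω}).toReal
          + (μ {ω | ∑ i ∈ Finset.range mm, ξ i ω ≤ (mm : ℝ) - n}).toReal := by
      rw [← ENNReal.toReal_add (measure_ne_top μ _) (measure_ne_top μ _)]
      exact ENNReal.toReal_mono (by finiteness) hμ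
    linarith
  · -- only upper tail
    have hsub : {ω | ε < |(∑ k ∈ Finset.range (T n ω), ξ k ω) / n - 1|}
        ⊆ {ω | (mp : ℝ) - n + 1 ≤ ∑ i ∈ Finset.range mp, ξ i ω} := by
      intro ω hω
      rcases det_incl ξ hval n hnN ε hε mp mp hmp2 (by nlinarith : (2 - ε) * (n:ℝ) ≤ mp) ω
        (T n ω) (hT n ω) hω with h | h
      · exact h
      · exact absurd h.1 hε1
    have h1 : (μ {ω | ε < |(∑ k ∈ Finset.range (T n ω), ξ k ω) / n - 1|}).toReal
        ≤ (μ {ω | (mp : ℝ) - n + 1 ≤ ∑ i ∈ Finset.range mp, ξ i ω}).toReal :=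
      ENNReal.toReal_mono (measure_ne_top μ _) (measure_mono hsub)
    have := Real.exp_pos (-(1/256) * ε^2 * n / (2 + ε))
    linarith
end

section
/- Let (ξ_i) be independent Bernoulli(p_i) with δ_k = Σ_{i=1}^k (2p_i - 1) uniformly bounded, T_n the trial of the n-th failure among the ξ_i. Then there is a constant C > 0 such that for all ε > 0 and sufficiently large n, P(|T_n/n - 2| > ε) ≤ 2 exp(-C ε² n / (2 + ε)). -/
open MeasureTheory ProbabilityTheory Finset Filter


lemma exp_le_quad {x : ℝ} (hx : |x| ≤ 1) : Real.exp x ≤ 1 + x + x ^ 2 := by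
  have h := Real.exp_bound hx (n := 3) (by norm_num)
  have hsum : ∑ m ∈ Finset.range 3, x ^ m / m.factorial = 1 + x + x ^ 2 / 2 := by
    norm_num [Finset.sum_range_succ, Nat.factorial]
  rw [hsum] at h
  have h3 : |x| ^ 3 ≤ x ^ 2 := by
    have h1 : |x| ^ 3 = x ^ 2 * |x| := by
      rw [pow_succ, sq_abs]
    rw [h1]
    nlinarith [abs_nonneg x, sq_nonneg x]
  have h2 := (abs_le.mp h).2
  have hc : (((3:ℕ).succ : ℝ) / (((3:ℕ).factorial : ℝ) * ((3:ℕ):ℝ))) = 2/9 := by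
    norm_num [Nat.factorial]
  rw [hc] at h2
  nlinarith [sq_nonneg x]

lemma bern_mgf_le {s q : ℝ} (hs : |s| ≤ 1) (hq0 : 0 ≤ q) (hq1 : q ≤ 1) :
    Real.exp (s * q) * (1 + (Real.exp (-s) - 1) * q) ≤ Real.exp (s ^ 2 / 2) := by
  have habs := abs_le.mp hs
  have hkey : Real.exp (s * q) * (1 + (Real.exp (-s) - 1) * q)
      = (1 - q) * Real.exp (s * q) + q * Real.exp (s * q - s) := by
    rw [show s * q - s = s * q + (-s) by ring, Real.exp_add]
    ring
  have h1 : Real.exp (s * q) ≤ 1 + s * q + (s * q) ^ 2 := by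
    apply exp_le_quad
    rw [abs_mul, abs_of_nonneg hq0]
    calc |s| * q ≤ 1 * 1 := by
          apply mul_le_mul hs hq1 hq0 zero_le_one
    _ = 1 := by ring
  have h2 : Real.exp (s * q - s) ≤ 1 + (s * q - s) + (s * q - s) ^ 2 := by
    apply exp_le_quad
    have : s * q - s = -(s * (1 - q)) := by ring
    rw [this, abs_neg, abs_mul, abs_of_nonneg (by linarith : (0:ℝ) ≤ 1 - q)]
    calc |s| * (1 - q) ≤ 1 * 1 := by
          apply mul_le_mul hs (by linarith) (by linarith) zero_le_one
    _ = 1 := by ring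
  have e1 := mul_le_mul_of_nonneg_left h1 (by linarith : (0:ℝ) ≤ 1 - q)
  have e2 := mul_le_mul_of_nonneg_left h2 hq0
  have hfin : (1 - q) * (1 + s * q + (s * q) ^ 2) + q * (1 + (s * q - s) + (s * q - s) ^ 2)
      ≤ 1 + s ^ 2 / 2 := by
    nlinarith [sq_nonneg (s * (1 - 2 * q)), sq_nonneg s]
  have := Real.add_one_le_exp (s ^ 2 / 2)
  rw [hkey]
  linarith


lemma aux_mono (x : ℕ → ℝ) (hx : ∀ i, x i = 0 ∨ x i = 1) {k j : ℕ} (h : k ≤ j) :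
    ∑ i ∈ Finset.range k, (1 - x i) ≤ ∑ i ∈ Finset.range j, (1 - x i) := by
  apply Finset.sum_le_sum_of_subset_of_nonneg (Finset.range_subset_range.mpr h)
  intro i _ _
  rcases hx i with h0 | h0 <;> simp [h0]

lemma aux_IVT (x : ℕ → ℝ) (hx : ∀ i, x i = 0 ∨ x i = 1) (n : ℕ) (hn : 1 ≤ n) (M : ℕ) :
    (∑ i ∈ Finset.range M, (1 - x i)) < n ∨
      ∃ k ≤ M, ∑ i ∈ Finset.range k, (1 - x i) = (n : ℝ) := by
  have hnat : ∀ k : ℕ, ∃ j : ℕ, ∑ i ∈ Finset.range k, (1 - x i) = (j : ℝ) := by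
    intro k
    induction k with
    | zero => exact ⟨0, by simp⟩
    | succ k ih =>
      obtain ⟨j, hj⟩ := ih
      rcases hx k with h0 | h1
      · exact ⟨j + 1, by rw [Finset.sum_range_succ, hj, h0]; push_cast; ring⟩
      · exact ⟨j, by rw [Finset.sum_range_succ, hj, h1]; ring⟩
  induction M with
  | zero =>
    left
    simpa using (by exact_mod_cast hn : (0:ℝ) < n)
  | succ M ih =>
    rcases ih with hlt | ⟨k, hk, hkeq⟩
    · obtain ⟨j, hj⟩ := hnat M
      have hjn : j < n := by
        rw [hj] at hlt
        exact_mod_cast hlt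
      rcases hx M with h0 | h1
      · -- step adds 1
        have hstep : ∑ i ∈ Finset.range (M + 1), (1 - x i) = (j : ℝ) + 1 := by
          rw [Finset.sum_range_succ, hj, h0]; ring
        rcases eq_or_lt_of_le (Nat.succ_le_of_lt hjn) with heq | hlt'
        · right
          exact ⟨M + 1, le_refl _, by rw [hstep, ← heq]; push_cast; ring⟩
        · left
          rw [hstep]
          exact_mod_cast hlt'
      · left
        rw [Finset.sum_range_succ, h1]
        simpa using hlt
    · exact Or.inr ⟨k, Nat.le_succ_of_le hk, hkeq⟩



lemma chernoff_aux
    {Ω : Type*} [MeasurableSpace Ω] (μ : Measure Ω) [IsProbabilityMeasure μ]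
    (p : ℕ → ℝ) (hp : ∀ i, p i ∈ Set.Ioo (0:ℝ) 1)
    (ξ : ℕ → Ω → ℝ) (hmeas : ∀ i, Measurable (ξ i))
    (hval : ∀ i ω, ξ i ω = 0 ∨ ξ i ω = 1)
    (hind : iIndepFun ξ μ)
    (hmean : ∀ i, ∫ ω, ξ i ω ∂μ = p i)
    (k : ℕ) (a t : ℝ) (ht0 : 0 ≤ t) (ht1 : |t| ≤ 1) :
    (μ {ω | a ≤ ∑ i ∈ Finset.range k, (p i - ξ i ω)}).toReal
        ≤ Real.exp (-t * a + k * t ^ 2 / 2) ∧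
    (μ {ω | a ≤ ∑ i ∈ Finset.range k, (ξ i ω - p i)}).toReal
        ≤ Real.exp (-t * a + k * t ^ 2 / 2) := by
  have hξbd : ∀ i ω, 0 ≤ ξ i ω ∧ ξ i ω ≤ 1 := by
    intro i ω; rcases hval i ω with h | h <;> simp [h]
  have hξint : ∀ i, Integrable (ξ i) μ := by
    intro i
    refine Integrable.mono' (integrable_const 1) (hmeas i).aestronglyMeasurable ?_
    filter_upwards with ω
    rw [Real.norm_eq_abs, abs_of_nonneg (hξbd i ω).1]
    exact (hξbd i ω).2
  -- exact mgf of each summand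
  have hintexp : ∀ (i : ℕ) (s : ℝ),
      ∫ ω, Real.exp (s * (p i - ξ i ω)) ∂μ
        = Real.exp (s * p i) * (1 + (Real.exp (-s) - 1) * p i) := by
    intro i s
    have hpt : ∀ ω, Real.exp (s * (p i - ξ i ω))
        = Real.exp (s * p i) * (1 + (Real.exp (-s) - 1) * ξ i ω) := by
      intro ω
      rcases hval i ω with h | h
      · simp [h]
      · rw [h, show s * (p i - 1) = s * p i + (-s) by ring, Real.exp_add]
        ring
    calc ∫ ω, Real.exp (s * (p i - ξ i ω)) ∂μ
        = ∫ ω, Real.exp (s * p i) * (1 + (Real.exp (-s) - 1) * ξ i ω) ∂μ := by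
          exact integral_congr_ae (Filter.Eventually.of_forall hpt)
      _ = Real.exp (s * p i) * ∫ ω, (1 + (Real.exp (-s) - 1) * ξ i ω) ∂μ := by
          rw [integral_const_mul]
      _ = Real.exp (s * p i) * (1 + (Real.exp (-s) - 1) * p i) := by
          rw [integral_add (integrable_const 1) ((hξint i).const_mul _),
            integral_const, integral_const_mul, hmean i]
          simp
  have hmgf_le : ∀ (i : ℕ) (s : ℝ), |s| ≤ 1 →
      ∫ ω, Real.exp (s * (p i - ξ i ω)) ∂μ ≤ Real.exp (s ^ 2 / 2) := by
    intro i s hs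
    rw [hintexp i s]
    exact bern_mgf_le hs (hp i).1.le (hp i).2.le
  set Y : ℕ → Ω → ℝ := fun i ω => p i - ξ i ω with hYdef
  have hYmeas : ∀ i, Measurable (Y i) := fun i => measurable_const.sub (hmeas i)
  have hYind : iIndepFun Y μ :=
    hind.comp (fun i x => p i - x) (fun i => measurable_const.sub measurable_id)
  set X : Ω → ℝ := fun ω => ∑ i ∈ Finset.range k, (p i - ξ i ω) with hXdef
  have hXsum : (∑ i ∈ Finset.range k, Y i) = X := by
    funext ω
    simp [hXdef, hYdef, Finset.sum_apply]
  have hXmeas : Measurable X := by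
    apply Finset.measurable_sum
    intro i _
    exact measurable_const.sub (hmeas i)
  have hXbd : ∀ ω, |X ω| ≤ k := by
    intro ω
    calc |X ω| ≤ ∑ i ∈ Finset.range k, |p i - ξ i ω| := Finset.abs_sum_le_sum_abs _ _
    _ ≤ ∑ i ∈ Finset.range k, 1 := by
        apply Finset.sum_le_sum
        intro i _
        rw [abs_le]
        constructor
        · have := (hξbd i ω).2; have := (hp i).1.le; linarith
        · have := (hξbd i ω).1; have := (hp i).2.le; linarith
    _ = k := by simp
  have hint : ∀ s : ℝ, Integrable (fun ω => Real.exp (s * X ω)) μ := by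
    intro s
    refine Integrable.mono' (integrable_const (Real.exp (|s| * k)))
      (Real.measurable_exp.comp (measurable_const.mul hXmeas)).aestronglyMeasurable ?_
    filter_upwards with ω
    rw [Real.norm_eq_abs, abs_of_pos (Real.exp_pos _), Real.exp_le_exp]
    calc s * X ω ≤ |s * X ω| := le_abs_self _
    _ = |s| * |X ω| := abs_mul _ _
    _ ≤ |s| * k := by
        exact mul_le_mul_of_nonneg_left (hXbd ω) (abs_nonneg s)
  have hmgfX : ∀ s : ℝ, |s| ≤ 1 → mgf X μ s ≤ Real.exp (k * s ^ 2 / 2) := by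
    intro s hs
    rw [← hXsum, hYind.mgf_sum hYmeas]
    calc ∏ i ∈ Finset.range k, mgf (Y i) μ s
        ≤ ∏ i ∈ Finset.range k, Real.exp (s ^ 2 / 2) := by
          apply Finset.prod_le_prod
          · intro i _; exact mgf_nonneg
          · intro i _; exact hmgf_le i s hs
    _ = Real.exp (s ^ 2 / 2) ^ k := by rw [Finset.prod_const, Finset.card_range]
    _ = Real.exp (k * s ^ 2 / 2) := by
          rw [← Real.exp_nat_mul]; ring_nf
  constructor
  · -- upper tail of X
    calc (μ {ω | a ≤ ∑ i ∈ Finset.range k, (p i - ξ i ω)}).toReal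
        ≤ Real.exp (-t * a) * mgf X μ t := measure_ge_le_exp_mul_mgf a ht0 (hint t)
    _ ≤ Real.exp (-t * a) * Real.exp (k * t ^ 2 / 2) := by
        exact mul_le_mul_of_nonneg_left (hmgfX t ht1) (Real.exp_pos _).le
    _ = Real.exp (-t * a + k * t ^ 2 / 2) := (Real.exp_add _ _).symm
  · -- it is the lower tail of X
    have hset : {ω | a ≤ ∑ i ∈ Finset.range k, (ξ i ω - p i)} = {ω | X ω ≤ -a} := by
      ext ω
      simp only [Set.mem_setOf_eq, hXdef]
      rw [show ∑ i ∈ Finset.range k, (ξ i ω - p i)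
          = -∑ i ∈ Finset.range k, (p i - ξ i ω) by
        rw [← Finset.sum_neg_distrib]
        exact Finset.sum_congr rfl fun i _ => by ring]
      constructor <;> intro h <;> linarith
    rw [hset]
    have hnt : -t ≤ 0 := neg_nonpos.mpr ht0
    calc (μ {ω | X ω ≤ -a}).toReal
        ≤ Real.exp (-(-t) * (-a)) * mgf X μ (-t) :=
          measure_le_le_exp_mul_mgf (-a) hnt (by simpa using hint (-t))
    _ ≤ Real.exp (-t * a) * Real.exp (k * t ^ 2 / 2) := by
        rw [show -(-t) * -a = -t * a by ring]
        refine mul_le_mul_of_nonneg_left ?_ (Real.exp_pos _).le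
        have := hmgfX (-t) (by simpa using ht1)
        simpa using this
    _ = Real.exp (-t * a + k * t ^ 2 / 2) := (Real.exp_add _ _).symm

theorem concentration_Tn
    {Ω : Type*} [MeasurableSpace Ω] (μ : Measure Ω) [IsProbabilityMeasure μ]
    (p : ℕ → ℝ) (hp : ∀ i, p i ∈ Set.Ioo (0:ℝ) 1)
    (ξ : ℕ → Ω → ℝ) (hmeas : ∀ i, Measurable (ξ i))
    (hval : ∀ i ω, ξ i ω = 0 ∨ ξ i ω = 1)
    (hind : iIndepFun ξ μ)
    (hmean : ∀ i, ∫ ω, ξ i ω ∂μ = p i)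
    (D : ℝ) (hD : ∀ k : ℕ, |∑ i ∈ Finset.range k, (2 * p i - 1)| ≤ D)
    (T : ℕ → Ω → ℕ)
    (hT : ∀ n ω, T n ω = sInf {k : ℕ | ∑ i ∈ Finset.range k, (1 - ξ i ω) = (n:ℝ)}) :
    ∃ C : ℝ, 0 < C ∧ ∀ ε : ℝ, 0 < ε → ∀ᶠ n : ℕ in atTop,
      (μ {ω | ε < |(T n ω : ℝ) / n - 2|}).toReal ≤
        2 * Real.exp (-C * ε^2 * n / (2 + ε)) := by
  have hD0 : 0 ≤ D := by simpa using hD 0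
  -- bounds on partial sums of 1 - p i
  have hsum1 : ∀ k : ℕ, ((k:ℝ) - D)/2 ≤ ∑ i ∈ Finset.range k, (1 - p i) ∧
      ∑ i ∈ Finset.range k, (1 - p i) ≤ ((k:ℝ) + D)/2 := by
    intro k
    have h1 : ∑ i ∈ Finset.range k, ((1:ℝ) - p i)
        = (k:ℝ) - ∑ i ∈ Finset.range k, p i := by
      rw [Finset.sum_sub_distrib, Finset.sum_const, Finset.card_range, nsmul_eq_mul, mul_one]
    have h2 : ∑ i ∈ Finset.range k, (2 * p i - 1)
        = 2 * (∑ i ∈ Finset.range k, p i) - (k:ℝ) := by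
      rw [Finset.sum_sub_distrib, Finset.sum_const, Finset.card_range, nsmul_eq_mul, mul_one,
        ← Finset.mul_sum]
    have habs := abs_le.mp (hD k)
    constructor <;> [skip; skip] <;> rw [h1] <;> rw [h2] at habs <;>
      [linarith [habs.2]; linarith [habs.1]]
  refine ⟨1/32, by norm_num, ?_⟩
  intro ε hε
  have h2ε : (0:ℝ) < 2 + ε := by linarith
  set t : ℝ := ε / (4 * (2 + ε)) with htdef
  have ht0 : 0 < t := div_pos hε (by positivity)
  have htle : t ≤ 1 := by
    rw [htdef, div_le_one (by positivity)]
    linarith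
  have ht1 : |t| ≤ 1 := by rwa [abs_of_pos ht0]
  filter_upwards [eventually_ge_atTop (max 1 ⌈2 * (1 + D) / ε⌉₊)] with n hn
  have hn1 : 1 ≤ n := le_trans (le_max_left _ _) hn
  have hnR : (1:ℝ) ≤ n := by exact_mod_cast hn1
  have hnpos : (0:ℝ) < n := by linarith
  have hεn : 2 * (1 + D) ≤ ε * n := by
    have h := Nat.ceil_le.mp (le_trans (le_max_right _ _) hn)
    calc 2 * (1 + D) = (2 * (1 + D) / ε) * ε := by field_simp
    _ ≤ (n:ℝ) * ε := mul_le_mul_of_nonneg_right h hε.le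
    _ = ε * n := by ring
  set m : ℕ := ⌊(2 + ε) * n⌋₊ with hmdef
  set m2 : ℕ := ⌈(2 - ε) * n⌉₊ - 1 with hm2def
  have hm_le : (m:ℝ) ≤ (2 + ε) * n := Nat.floor_le (by positivity)
  have hm_gt : (2 + ε) * n - 1 < (m:ℝ) := by
    have := Nat.lt_floor_add_one ((2 + ε) * n)
    push_cast at this ⊢
    linarith
  have hm2_le : (m2:ℝ) ≤ 2 * n := by
    have h1 : m2 ≤ ⌈(2 - ε) * (n:ℝ)⌉₊ := Nat.sub_le _ _
    have h2 : ⌈(2 - ε) * (n:ℝ)⌉₊ ≤ 2 * n := by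
      rw [show ((2 * n : ℕ) : ℕ) = 2 * n from rfl] at *
      have : ((2 - ε) * (n:ℝ)) ≤ ((2 * n : ℕ) : ℝ) := by push_cast; nlinarith
      calc ⌈(2 - ε) * (n:ℝ)⌉₊ ≤ ⌈((2 * n : ℕ) : ℝ)⌉₊ := Nat.ceil_le_ceil this
      _ = 2 * n := Nat.ceil_natCast _
    have := le_trans h1 h2
    calc (m2:ℝ) ≤ ((2 * n : ℕ) : ℝ) := by exact_mod_cast this
    _ = 2 * n := by push_cast; ring
  -- event inclusion
  set G1 : Set Ω := {ω | ε * n / 4 ≤ ∑ i ∈ Finset.range m, (ξ i ω - p i)} with hG1def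
  set G2 : Set Ω := {ω | ε * n / 4 ≤ ∑ i ∈ Finset.range m2, (p i - ξ i ω)} with hG2def
  have hsub : {ω | ε < |(T n ω : ℝ) / n - 2|} ⊆ G1 ∪ G2 := by
    intro ω hω
    simp only [Set.mem_setOf_eq] at hω
    have hkey1 : ∀ k : ℕ, ∑ i ∈ Finset.range k, (ξ i ω - p i)
        = ∑ i ∈ Finset.range k, ((1:ℝ) - p i) - ∑ i ∈ Finset.range k, (1 - ξ i ω) := by
      intro k
      rw [← Finset.sum_sub_distrib]
      exact Finset.sum_congr rfl fun i _ => by ring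
    have hkey2 : ∀ k : ℕ, ∑ i ∈ Finset.range k, (p i - ξ i ω)
        = ∑ i ∈ Finset.range k, (1 - ξ i ω) - ∑ i ∈ Finset.range k, ((1:ℝ) - p i) := by
      intro k
      rw [← Finset.sum_sub_distrib]
      exact Finset.sum_congr rfl fun i _ => by ring
    -- if the sum over range m is < n then ω ∈ G1
    have hG1mem : (∑ i ∈ Finset.range m, (1 - ξ i ω)) < n → ω ∈ G1 := by
      intro hlt
      have hl := (hsum1 m).1
      simp only [hG1def, Set.mem_setOf_eq]
      rw [hkey1 m]
      nlinarith [hm_gt, hεn]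
    by_cases hne : {k : ℕ | ∑ i ∈ Finset.range k, (1 - ξ i ω) = (n:ℝ)}.Nonempty
    · have hτS : ∑ i ∈ Finset.range (T n ω), (1 - ξ i ω) = (n:ℝ) := by
        rw [hT n ω]
        exact Nat.sInf_mem hne
      rcases lt_abs.mp hω with hup | hdown
      · -- upper deviation
        have hτ_gt : (2 + ε) * n < (T n ω : ℝ) := by
          have h1 : 2 + ε < (T n ω : ℝ) / n := by linarith
          exact (lt_div_iff₀ hnpos).mp h1
        have hmτ : m < T n ω := by
          have : (m:ℝ) < T n ω := lt_of_le_of_lt hm_le hτ_gt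
          exact_mod_cast this
        have hSm_ne : ∑ i ∈ Finset.range m, (1 - ξ i ω) ≠ (n:ℝ) := by
          have hmem : m ∉ {k : ℕ | ∑ i ∈ Finset.range k, (1 - ξ i ω) = (n:ℝ)} := by
            apply Nat.notMem_of_lt_sInf
            rw [← hT n ω]
            exact hmτ
          exact hmem
        have hSm_le : ∑ i ∈ Finset.range m, (1 - ξ i ω) ≤ (n:ℝ) := by
          rw [← hτS]
          exact aux_mono _ (fun i => hval i ω) hmτ.le
        exact Or.inl (hG1mem (lt_of_le_of_ne hSm_le hSm_ne))
      · -- lower deviation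
        have hτ_lt : (T n ω : ℝ) < (2 - ε) * n := by
          have h1 : (T n ω : ℝ) / n < 2 - ε := by linarith
          rw [div_lt_iff₀ hnpos] at h1
          linarith [h1]
        have hpos2 : (0:ℝ) < (2 - ε) * n := lt_of_le_of_lt (Nat.cast_nonneg _) hτ_lt
        have hceil1 : 1 ≤ ⌈(2 - ε) * (n:ℝ)⌉₊ := Nat.ceil_pos.mpr hpos2
        have hτm2 : T n ω ≤ m2 := Nat.le_pred_of_lt (Nat.lt_ceil.mpr hτ_lt)
        have hm2R : (m2:ℝ) ≤ (2 - ε) * n := by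
          have h := Nat.ceil_lt_add_one hpos2.le
          have hc : (m2:ℝ) = (⌈(2 - ε) * (n:ℝ)⌉₊ : ℝ) - 1 := by
            rw [hm2def]
            push_cast [Nat.cast_sub hceil1]
            ring
          linarith
        have hSm2 : (n:ℝ) ≤ ∑ i ∈ Finset.range m2, (1 - ξ i ω) := by
          rw [← hτS]
          exact aux_mono _ (fun i => hval i ω) hτm2
        right
        simp only [hG2def, Set.mem_setOf_eq]
        rw [hkey2 m2]
        have hu := (hsum1 m2).2
        nlinarith [hεn]
    · -- the hitting set is empty
      have hnotmem : ∀ k, ∑ i ∈ Finset.range k, (1 - ξ i ω) ≠ (n:ℝ) := by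
        intro k hk
        exact hne ⟨k, hk⟩
      rcases aux_IVT (fun i => ξ i ω) (fun i => hval i ω) n hn1 m with hlt | ⟨k, _, hk⟩
      · exact Or.inl (hG1mem hlt)
      · exact absurd hk (hnotmem k)
  -- measure bounds
  have hb1 := (chernoff_aux μ p hp ξ hmeas hval hind hmean m (ε * n / 4) t ht0.le ht1).2
  have hb2 := (chernoff_aux μ p hp ξ hmeas hval hind hmean m2 (ε * n / 4) t ht0.le ht1).1
  have hexp : ∀ k : ℕ, (k:ℝ) ≤ (2 + ε) * n →
      Real.exp (-t * (ε * n / 4) + k * t ^ 2 / 2)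
        ≤ Real.exp (-(1/32) * ε ^ 2 * n / (2 + ε)) := by
    intro k hk
    rw [Real.exp_le_exp]
    have heq : -t * (ε * n / 4) + ((2 + ε) * n) * t ^ 2 / 2
        = -(1/32) * ε ^ 2 * n / (2 + ε) := by
      rw [htdef]
      field_simp
      ring
    have hmul : (k:ℝ) * t ^ 2 / 2 ≤ ((2 + ε) * n) * t ^ 2 / 2 := by
      have := sq_nonneg t
      apply div_le_div_of_nonneg_right _ (by norm_num)
      · exact mul_le_mul_of_nonneg_right hk (by positivity)
    linarith
  calc (μ {ω | ε < |(T n ω : ℝ) / n - 2|}).toReal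
      ≤ ((μ G1) + (μ G2)).toReal := by
        apply ENNReal.toReal_mono
        · exact ENNReal.add_ne_top.mpr ⟨measure_ne_top _ _, measure_ne_top _ _⟩
        · exact le_trans (measure_mono hsub) (measure_union_le _ _)
    _ = (μ G1).toReal + (μ G2).toReal :=
        ENNReal.toReal_add (measure_ne_top _ _) (measure_ne_top _ _)
    _ ≤ Real.exp (-(1/32) * ε ^ 2 * n / (2 + ε)) + Real.exp (-(1/32) * ε ^ 2 * n / (2 + ε)) := by
        have e1 := le_trans hb1 (hexp m hm_le)
        have e2 := le_trans hb2 (hexp m2 (by nlinarith [hm2_le]))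
        exact add_le_add e1 e2
    _ = 2 * Real.exp (-(1/32) * ε ^ 2 * n / (2 + ε)) := by ring
end

section
/- Suppose Σ_{j=1}^∞ (2p_j - 1) converges to δ and δ_k denotes its partial sums. Let T_n be as above (time of n-th failure, T_n ≥ n always). Then ρ(n) := E[Z_1 - n] = E[δ_{T_n}] converges to δ as n → ∞. -/
open MeasureTheory ProbabilityTheory Finset Filter
open scoped ENNReal

theorem rho_tendsto_delta
    {Ω : Type*} [MeasurableSpace Ω] (μ : Measure Ω) [IsProbabilityMeasure μ]
    (p : ℕ → ℝ) (hp : ∀ i, p i ∈ Set.Ioo (0:ℝ) 1)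
    (δ : ℝ)
    (hδ : Tendsto (fun k : ℕ => ∑ i ∈ Finset.range k, (2 * p i - 1)) atTop (nhds δ))
    (ξ : ℕ → Ω → ℝ) (hmeas : ∀ i, Measurable (ξ i))
    (hval : ∀ i ω, ξ i ω = 0 ∨ ξ i ω = 1)
    (hind : iIndepFun ξ μ)
    (hmean : ∀ i, ∫ ω, ξ i ω ∂μ = p i)
    (T : ℕ → Ω → ℕ) (hTmeas : ∀ n, Measurable (T n))
    (hT : ∀ n ω, T n ω = sInf {k : ℕ | ∑ i ∈ Finset.range k, (1 - ξ i ω) = (n:ℝ)})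
    (hfin : ∀ n : ℕ, ∀ᵐ ω ∂μ, ∃ k : ℕ, ∑ i ∈ Finset.range k, (1 - ξ i ω) = (n:ℝ))
    (hTint : ∀ n, Integrable (fun ω => (T n ω : ℝ)) μ) :
    (∀ n : ℕ, ∫ ω, ((∑ k ∈ Finset.range (T n ω), ξ k ω) - n) ∂μ =
        ∫ ω, (∑ i ∈ Finset.range (T n ω), (2 * p i - 1)) ∂μ) ∧
    Tendsto (fun n : ℕ => ∫ ω, (∑ i ∈ Finset.range (T n ω), (2 * p i - 1)) ∂μ)
      atTop (nhds δ) := by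
  classical
  have hξ0 : ∀ i ω, 0 ≤ ξ i ω := fun i ω => by rcases hval i ω with h | h <;> simp [h]
  -- basic a.e. facts
  have hae : ∀ n : ℕ, ∀ᵐ ω ∂μ,
      (∑ i ∈ Finset.range (T n ω), (1 - ξ i ω)) = (n:ℝ) ∧ n ≤ T n ω ∧
      ∀ k : ℕ, (k < T n ω ↔ ∀ m ≤ k, (∑ j ∈ Finset.range m, (1 - ξ j ω)) ≠ (n:ℝ)) := by
    intro n
    filter_upwards [hfin n] with ω hex
    have hne : {k : ℕ | (∑ i ∈ Finset.range k, (1 - ξ i ω)) = (n:ℝ)}.Nonempty := hex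
    have h1 : (∑ i ∈ Finset.range (T n ω), (1 - ξ i ω)) = (n:ℝ) := by
      rw [hT n ω]; exact Nat.sInf_mem hne
    refine ⟨h1, ?_, ?_⟩
    · have hle : (n:ℝ) ≤ (T n ω : ℝ) := by
        calc (n:ℝ) = ∑ i ∈ Finset.range (T n ω), (1 - ξ i ω) := h1.symm
          _ ≤ ∑ _i ∈ Finset.range (T n ω), (1:ℝ) :=
            Finset.sum_le_sum fun i _ => by linarith [hξ0 i ω]
          _ = (T n ω : ℝ) := by simp
      exact_mod_cast hle
    · intro k
      constructor
      · intro hk m hm hcontra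
        have : T n ω ≤ m := by rw [hT n ω]; exact Nat.sInf_le hcontra
        omega
      · intro hall
        by_contra hk
        push_neg at hk
        exact hall (T n ω) hk h1
  -- measure of success sets
  have hμ1 : ∀ i, μ (ξ i ⁻¹' {1}) = ENNReal.ofReal (p i) := by
    intro i
    have hs : MeasurableSet (ξ i ⁻¹' {1}) := hmeas i (measurableSet_singleton 1)
    have hindic : (fun ω => ξ i ω) = Set.indicator (ξ i ⁻¹' {1}) (fun _ => (1:ℝ)) := by
      funext ω
      rcases hval i ω with h | h <;>
        simp [Set.indicator_apply, Set.mem_preimage, h]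
    have hm := hmean i
    rw [hindic, integral_indicator_const _ hs, smul_eq_mul, mul_one] at hm
    rw [← hm, measureReal_def, ENNReal.ofReal_toReal (measure_ne_top μ _)]
  -- measurability helper : functions of the form ω ↦ F (T n ω) ω
  have hmeasF : ∀ (n : ℕ) (F : ℕ → Ω → ℝ), (∀ m, Measurable (F m)) →
      Measurable (fun ω => F (T n ω) ω) := by
    intro n F hF
    have h1 : Measurable (fun q : Ω × ℕ => F q.2 q.1) :=
      measurable_from_prod_countable_left fun m => hF m
    exact h1.comp (measurable_id.prodMk (hTmeas n))
  -- Wald's identity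
  have wald : ∀ n : ℕ, ∫ ω, (∑ k ∈ Finset.range (T n ω), ξ k ω) ∂μ =
      ∫ ω, (∑ i ∈ Finset.range (T n ω), p i) ∂μ := by
    intro n
    set A : ℕ → Set Ω :=
      fun i => {ω | ∀ m ≤ i, (∑ j ∈ Finset.range m, (1 - ξ j ω)) ≠ (n:ℝ)} with hA_def
    have hAmeas : ∀ i, MeasurableSet (A i) := by
      intro i
      have : A i = ⋂ m ∈ Set.Iic i,
          ((fun ω => ∑ j ∈ Finset.range m, (1 - ξ j ω)) ⁻¹' {((n:ℕ):ℝ)})ᶜ := by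
        ext ω; simp [A, Set.mem_iInter]
      rw [this]
      exact MeasurableSet.biInter (Set.to_countable _) fun m _ =>
        ((Finset.measurable_sum _ fun j _ => measurable_const.sub (hmeas j))
          (measurableSet_singleton _)).compl
    -- independence
    have hIndep : ∀ i, μ (A i ∩ ξ i ⁻¹' {1}) = μ (A i) * μ (ξ i ⁻¹' {1}) := by
      intro i
      have hdisj : Disjoint (Finset.range i) ({i} : Finset ℕ) := by simp
      have hI := hind.indepFun_finset (Finset.range i) {i} hdisj hmeas
      set E : ({j // j ∈ Finset.range i} → ℝ) → (ℕ → ℝ) :=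
        fun x j => if h : j ∈ Finset.range i then x ⟨j, h⟩ else 0 with hE_def
      have hEmeas : Measurable E := by
        apply measurable_pi_lambda
        intro j
        by_cases h : j ∈ Finset.range i
        · simp only [hE_def, dif_pos h]; exact measurable_pi_apply _
        · simp only [hE_def, dif_neg h]; exact measurable_const
      set C : Set (ℕ → ℝ) :=
        {y | ∀ m ≤ i, (∑ j ∈ Finset.range m, (1 - y j)) ≠ (n:ℝ)} with hC_def
      have hCmeas : MeasurableSet C := by
        have : C = ⋂ m ∈ Set.Iic i,
            ((fun y : ℕ → ℝ => ∑ j ∈ Finset.range m, (1 - y j)) ⁻¹' {((n:ℕ):ℝ)})ᶜ := by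
          ext y; simp [hC_def, Set.mem_iInter]
        rw [this]
        exact MeasurableSet.biInter (Set.to_countable _) fun m _ =>
          ((Finset.measurable_sum _ fun j _ =>
            measurable_const.sub (measurable_pi_apply j)) (measurableSet_singleton _)).compl
      have hXB : (fun ω (j : {j // j ∈ Finset.range i}) => ξ j ω) ⁻¹' (E ⁻¹' C) = A i := by
        ext ω
        have hsum : ∀ m ≤ i,
            (∑ j ∈ Finset.range m, (1 - E (fun j : {j // j ∈ Finset.range i} => ξ j ω) j))
              = ∑ j ∈ Finset.range m, (1 - ξ j ω) := by
          intro m hm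
          refine Finset.sum_congr rfl fun j hj => ?_
          have hji : j ∈ Finset.range i :=
            Finset.mem_range.mpr (lt_of_lt_of_le (Finset.mem_range.mp hj) hm)
          simp only [hE_def, dif_pos hji]
        simp only [Set.mem_preimage, Set.mem_setOf_eq, hC_def, hA_def]
        constructor
        · intro h m hm; rw [← hsum m hm]; exact h m hm
        · intro h m hm; rw [hsum m hm]; exact h m hm
      have hYD : (fun ω (j : {j // j ∈ ({i} : Finset ℕ)}) => ξ j ω) ⁻¹'
          ((fun y : {j // j ∈ ({i} : Finset ℕ)} → ℝ => y ⟨i, Finset.mem_singleton_self i⟩) ⁻¹' {1})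
            = ξ i ⁻¹' {1} := rfl
      rw [← hXB, ← hYD]
      exact hI.measure_inter_preimage_eq_mul _ _ (hEmeas hCmeas)
        ((measurable_pi_apply _) (measurableSet_singleton _))
    -- lintegral computations
    have hG1 : ∫⁻ ω, ENNReal.ofReal (∑ k ∈ Finset.range (T n ω), ξ k ω) ∂μ
        = ∑' k, μ (A k ∩ ξ k ⁻¹' {1}) := by
      have step : ∀ᵐ ω ∂μ, ENNReal.ofReal (∑ k ∈ Finset.range (T n ω), ξ k ω)
          = ∑' k, Set.indicator (A k ∩ ξ k ⁻¹' {1}) (fun _ => (1:ℝ≥0∞)) ω := by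
        filter_upwards [hae n] with ω hω
        obtain ⟨h1, h2, hiff⟩ := hω
        rw [ENNReal.ofReal_sum_of_nonneg (fun k _ => hξ0 k ω)]
        have hz : ∀ k ∉ Finset.range (T n ω),
            Set.indicator (A k ∩ ξ k ⁻¹' {1}) (fun _ => (1:ℝ≥0∞)) ω = 0 := by
          intro k hk
          have hkT : ¬ k < T n ω := fun h => hk (Finset.mem_range.mpr h)
          have hnA : ω ∉ A k := fun hA => hkT ((hiff k).mpr hA)
          exact Set.indicator_of_notMem (fun h => hnA h.1) _
        rw [tsum_eq_sum hz]
        refine Finset.sum_congr rfl fun k hk => ?_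
        have hkT : k < T n ω := Finset.mem_range.mp hk
        have hA : ω ∈ A k := (hiff k).mp hkT
        rcases hval k ω with h | h
        · have hn1 : ω ∉ ξ k ⁻¹' {1} := by simp [Set.mem_preimage, h]
          rw [Set.indicator_of_notMem (fun hc => hn1 hc.2), h]
          simp
        · have hm : ω ∈ A k ∩ ξ k ⁻¹' {1} := ⟨hA, by simp [Set.mem_preimage, h]⟩
          rw [Set.indicator_of_mem hm, h]
          simp
      rw [lintegral_congr_ae step,
        lintegral_tsum (fun k => (measurable_const.indicator
          ((hAmeas k).inter (hmeas k (measurableSet_singleton 1)))).aemeasurable)]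
      exact tsum_congr fun k =>
        lintegral_indicator_one ((hAmeas k).inter (hmeas k (measurableSet_singleton 1)))
    have hG2 : ∫⁻ ω, ENNReal.ofReal (∑ i ∈ Finset.range (T n ω), p i) ∂μ
        = ∑' i, ENNReal.ofReal (p i) * μ (A i) := by
      have step : ∀ᵐ ω ∂μ, ENNReal.ofReal (∑ i ∈ Finset.range (T n ω), p i)
          = ∑' i, Set.indicator (A i) (fun _ => ENNReal.ofReal (p i)) ω := by
        filter_upwards [hae n] with ω hω
        obtain ⟨h1, h2, hiff⟩ := hω
        rw [ENNReal.ofReal_sum_of_nonneg (fun i _ => (hp i).1.le)]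
        have hz : ∀ k ∉ Finset.range (T n ω),
            Set.indicator (A k) (fun _ => ENNReal.ofReal (p k)) ω = 0 := by
          intro k hk
          have hkT : ¬ k < T n ω := fun h => hk (Finset.mem_range.mpr h)
          have hnA : ω ∉ A k := fun hA => hkT ((hiff k).mpr hA)
          exact Set.indicator_of_notMem hnA _
        rw [tsum_eq_sum hz]
        refine Finset.sum_congr rfl fun k hk => ?_
        have hA : ω ∈ A k := (hiff k).mp (Finset.mem_range.mp hk)
        rw [Set.indicator_of_mem hA]
      rw [lintegral_congr_ae step,
        lintegral_tsum (fun i => (measurable_const.indicator (hAmeas i)).aemeasurable)]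
      exact tsum_congr fun i => lintegral_indicator_const (hAmeas i) _
    have hlin : ∫⁻ ω, ENNReal.ofReal (∑ k ∈ Finset.range (T n ω), ξ k ω) ∂μ
        = ∫⁻ ω, ENNReal.ofReal (∑ i ∈ Finset.range (T n ω), p i) ∂μ := by
      rw [hG1, hG2]
      refine tsum_congr fun k => ?_
      rw [hIndep k, hμ1 k, mul_comm]
    -- integrability
    have haeG : (fun ω => ∑ k ∈ Finset.range (T n ω), ξ k ω)
        =ᵐ[μ] fun ω => (T n ω : ℝ) - n := by
      filter_upwards [hae n] with ω hω
      obtain ⟨h1, -, -⟩ := hω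
      have : ∑ k ∈ Finset.range (T n ω), ξ k ω
          = ∑ k ∈ Finset.range (T n ω), ((1:ℝ) - (1 - ξ k ω)) := by
        refine Finset.sum_congr rfl fun k _ => by ring
      rw [this, Finset.sum_sub_distrib, h1]
      simp
    have hGint : Integrable (fun ω => ∑ k ∈ Finset.range (T n ω), ξ k ω) μ :=
      ((hTint n).sub (integrable_const ((n:ℝ)))).congr haeG.symm
    have hPmeas : Measurable (fun ω => ∑ i ∈ Finset.range (T n ω), p i) :=
      hmeasF n (fun m _ => ∑ i ∈ Finset.range m, p i) (fun m => measurable_const)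
    have hPint : Integrable (fun ω => ∑ i ∈ Finset.range (T n ω), p i) μ := by
      refine Integrable.mono (hTint n) hPmeas.aestronglyMeasurable (ae_of_all _ fun ω => ?_)
      have h0 : (0:ℝ) ≤ ∑ i ∈ Finset.range (T n ω), p i :=
        Finset.sum_nonneg fun i _ => (hp i).1.le
      have hub : ∑ i ∈ Finset.range (T n ω), p i ≤ (T n ω : ℝ) := by
        calc ∑ i ∈ Finset.range (T n ω), p i ≤ ∑ _i ∈ Finset.range (T n ω), (1:ℝ) :=
            Finset.sum_le_sum fun i _ => (hp i).2.le
          _ = (T n ω : ℝ) := by simp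
      rw [Real.norm_eq_abs, Real.norm_eq_abs, abs_of_nonneg h0,
        abs_of_nonneg (by positivity)]
      exact hub
    rw [integral_eq_lintegral_of_nonneg_ae
        (ae_of_all _ fun ω => Finset.sum_nonneg fun k _ => hξ0 k ω)
        hGint.aestronglyMeasurable,
      integral_eq_lintegral_of_nonneg_ae
        (ae_of_all _ fun ω => Finset.sum_nonneg fun i _ => (hp i).1.le)
        hPint.aestronglyMeasurable,
      hlin]
  -- derived facts
  have haeG : ∀ n, (fun ω => ∑ k ∈ Finset.range (T n ω), ξ k ω)
      =ᵐ[μ] fun ω => (T n ω : ℝ) - n := by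
    intro n
    filter_upwards [hae n] with ω hω
    obtain ⟨h1, -, -⟩ := hω
    have : ∑ k ∈ Finset.range (T n ω), ξ k ω
        = ∑ k ∈ Finset.range (T n ω), ((1:ℝ) - (1 - ξ k ω)) := by
      refine Finset.sum_congr rfl fun k _ => by ring
    rw [this, Finset.sum_sub_distrib, h1]
    simp
  have hGint : ∀ n, Integrable (fun ω => ∑ k ∈ Finset.range (T n ω), ξ k ω) μ := fun n =>
    ((hTint n).sub (integrable_const ((n:ℝ)))).congr (haeG n).symm
  have hPint : ∀ n, Integrable (fun ω => ∑ i ∈ Finset.range (T n ω), p i) μ := by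
    intro n
    have hPmeas : Measurable (fun ω => ∑ i ∈ Finset.range (T n ω), p i) :=
      hmeasF n (fun m _ => ∑ i ∈ Finset.range m, p i) (fun m => measurable_const)
    refine Integrable.mono (hTint n) hPmeas.aestronglyMeasurable (ae_of_all _ fun ω => ?_)
    have h0 : (0:ℝ) ≤ ∑ i ∈ Finset.range (T n ω), p i :=
      Finset.sum_nonneg fun i _ => (hp i).1.le
    have hub : ∑ i ∈ Finset.range (T n ω), p i ≤ (T n ω : ℝ) := by
      calc ∑ i ∈ Finset.range (T n ω), p i ≤ ∑ _i ∈ Finset.range (T n ω), (1:ℝ) :=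
          Finset.sum_le_sum fun i _ => (hp i).2.le
        _ = (T n ω : ℝ) := by simp
    rw [Real.norm_eq_abs, Real.norm_eq_abs, abs_of_nonneg h0,
      abs_of_nonneg (by positivity)]
    exact hub
  have hsplit : ∀ (n : ℕ) (ω : Ω), (∑ i ∈ Finset.range (T n ω), (2 * p i - 1))
      = 2 * (∑ i ∈ Finset.range (T n ω), p i) - (T n ω : ℝ) := by
    intro n ω
    rw [Finset.sum_sub_distrib, ← Finset.mul_sum]
    simp
  constructor
  · intro n
    have hTn : ∫ ω, ((T n ω : ℝ) - n) ∂μ = ∫ ω, (T n ω : ℝ) ∂μ - n := by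
      rw [integral_sub (hTint n) (integrable_const _), integral_const]
      simp
    have hG : ∫ ω, (∑ k ∈ Finset.range (T n ω), ξ k ω) ∂μ = ∫ ω, (T n ω : ℝ) ∂μ - n := by
      rw [integral_congr_ae (haeG n), hTn]
    have hP : ∫ ω, (∑ i ∈ Finset.range (T n ω), p i) ∂μ = ∫ ω, (T n ω : ℝ) ∂μ - n := by
      rw [← wald n, hG]
    have hL : ∫ ω, ((∑ k ∈ Finset.range (T n ω), ξ k ω) - n) ∂μ
        = ∫ ω, (T n ω : ℝ) ∂μ - 2 * n := by
      rw [integral_sub (hGint n) (integrable_const _), integral_const, hG]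
      simp
      ring
    have hR : ∫ ω, (∑ i ∈ Finset.range (T n ω), (2 * p i - 1)) ∂μ
        = ∫ ω, (T n ω : ℝ) ∂μ - 2 * n := by
      have : (fun ω => ∑ i ∈ Finset.range (T n ω), (2 * p i - 1))
          = fun ω => 2 * (∑ i ∈ Finset.range (T n ω), p i) - (T n ω : ℝ) :=
        funext fun ω => hsplit n ω
      rw [this, integral_sub ((hPint n).const_mul 2) (hTint n),
        integral_const_mul, hP]
      ring
    rw [hL, hR]
  · -- convergence
    set δs : ℕ → ℝ := fun k => ∑ i ∈ Finset.range k, (2 * p i - 1) with hδs_def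
    obtain ⟨C, hC⟩ := (hδ.abs).bddAbove_range
    have hCb : ∀ k, |δs k| ≤ C := fun k => hC ⟨k, rfl⟩
    have hFmeas : ∀ n, Measurable (fun ω => δs (T n ω)) := fun n =>
      (measurable_from_top (f := δs)).comp (hTmeas n)
    have hlim : ∀ᵐ ω ∂μ, Tendsto (fun n => δs (T n ω)) atTop (nhds δ) := by
      have hall : ∀ᵐ ω ∂μ, ∀ n : ℕ, n ≤ T n ω := by
        rw [ae_all_iff]
        intro n
        filter_upwards [hae n] with ω hω
        exact hω.2.1
      filter_upwards [hall] with ω hω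
      have hTT : Tendsto (fun n => T n ω) atTop atTop :=
        tendsto_atTop_mono hω tendsto_id
      exact hδ.comp hTT
    have := tendsto_integral_of_dominated_convergence (fun _ => C)
      (fun n => (hFmeas n).aestronglyMeasurable) (integrable_const C)
      (fun n => ae_of_all _ fun ω => by
        rw [Real.norm_eq_abs]; exact hCb (T n ω))
      hlim
    have hconst : ∫ (_ : Ω), δ ∂μ = δ := by simp
    rw [← hconst]
    exact this
end

section
/- In the transient example environment: for n > 3, ρ(n) - 1 = E[(1/2)^{C(T_n)}], where C(x) = #{j ≤ x : p_j < 1/2} and T_n is the time of the n-th failure; consequently ρ(n) - 1 ≥ (1/√(log n)) P(T_n ≤ 3n) for all sufficiently large n. -/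
open Classical MeasureTheory ProbabilityTheory Finset Filter

noncomputable def cookieP (k : ℕ) : ℝ :=
  if 1 ≤ k ∧ k ≤ 3 then 5/6
  else if h : ∃ m : ℕ, 1 ≤ m ∧ k = 4^(4^m) then 1/2 - (1/2)^(h.choose + 1)
  else 1/2

/-- number of negative-drift cookies among the first `x` cookies -/
noncomputable def negCookieCount (x : ℕ) : ℕ :=
  ((Finset.Icc 1 x).filter (fun j => cookieP j < 1/2)).card

lemma fsm : StrictMono (fun m : ℕ => 4^(4^m)) := by
  intro a b h
  exact Nat.pow_lt_pow_right (by norm_num) (Nat.pow_lt_pow_right (by norm_num) h)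

lemma le_f (m : ℕ) : m ≤ 4^(4^m) :=
  le_trans (Nat.lt_pow_self (n := m) (a := 4) (by norm_num)).le (Nat.lt_pow_self (n := 4^m) (a := 4) (by norm_num)).le

lemma f_ge (m : ℕ) (hm : 1 ≤ m) : 256 ≤ 4^(4^m) := by
  calc (256:ℕ) = 4^(4^1) := by norm_num
  _ ≤ 4^(4^m) := fsm.monotone (by omega)

lemma cookieP_special (m : ℕ) (hm : 1 ≤ m) : cookieP (4^(4^m)) = 1/2 - (1/2)^(m+1) := by
  have h4 : ¬ (1 ≤ 4^(4^m) ∧ 4^(4^m) ≤ 3) := by have := f_ge m hm; omega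
  have hex : ∃ m' : ℕ, 1 ≤ m' ∧ 4^(4^m) = 4^(4^m') := ⟨m, hm, rfl⟩
  rw [cookieP, if_neg h4, dif_pos hex]
  have := hex.choose_spec
  have : m = hex.choose := fsm.injective this.2
  rw [← this]

lemma cookieP_lt_iff (j : ℕ) : cookieP j < 1/2 ↔ ∃ m : ℕ, 1 ≤ m ∧ j = 4^(4^m) := by
  rw [cookieP]
  split_ifs with h1 h2
  · constructor
    · intro h; norm_num at h
    · rintro ⟨m, hm, rfl⟩; have := f_ge m hm; omega
  · simp only [h2, iff_true]
    have : (0:ℝ) < (1/2)^(h2.choose + 1) := by positivity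
    linarith
  · simp [h2]

lemma cookieP_eq_half (j : ℕ) (hj : 4 ≤ j) (h : ¬ cookieP j < 1/2) : cookieP j = 1/2 := by
  rw [cookieP_lt_iff] at h
  rw [cookieP, if_neg (by omega), dif_neg h]

lemma negCookieCount_eq (x : ℕ) :
    negCookieCount x = ((Finset.Icc 1 x).filter (fun m => 1 ≤ m ∧ 4^(4^m) ≤ x)).card := by
  rw [negCookieCount]
  symm
  apply Finset.card_bij (fun m _ => 4^(4^m))
  · intro m hm
    simp only [Finset.mem_filter, Finset.mem_Icc] at hm ⊢
    refine ⟨⟨Nat.one_le_iff_ne_zero.mpr (by positivity), hm.2.2⟩, ?_⟩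
    rw [cookieP_lt_iff]; exact ⟨m, hm.2.1, rfl⟩
  · intro a ha b hb h
    exact fsm.injective h
  · intro j hj
    simp only [Finset.mem_filter, Finset.mem_Icc] at hj
    obtain ⟨m, hm, rfl⟩ := (cookieP_lt_iff j).mp hj.2
    refine ⟨m, ?_, rfl⟩
    simp only [Finset.mem_filter, Finset.mem_Icc]
    exact ⟨⟨hm, le_trans (le_f m) hj.1.2⟩, hm, hj.1.2⟩

lemma negCookieCount_special (m : ℕ) (hm : 1 ≤ m) : negCookieCount (4^(4^m)) = m := by
  rw [negCookieCount_eq]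
  have : ((Finset.Icc 1 (4^(4^m))).filter (fun m' => 1 ≤ m' ∧ 4^(4^m') ≤ 4^(4^m)))
      = Finset.Icc 1 m := by
    ext m'
    simp only [Finset.mem_filter, Finset.mem_Icc]
    constructor
    · rintro ⟨_, h1, h2⟩
      exact ⟨h1, by by_contra h; exact absurd h2 (not_le.mpr (fsm (by omega)))⟩
    · rintro ⟨h1, h2⟩
      exact ⟨⟨h1, le_trans (le_f m') (fsm.monotone h2)⟩, h1, fsm.monotone h2⟩
  rw [this, Nat.card_Icc]; omega

lemma negCookieCount_special_pred (m : ℕ) (hm : 1 ≤ m) :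
    negCookieCount (4^(4^m) - 1) = m - 1 := by
  rw [negCookieCount_eq]
  have : ((Finset.Icc 1 (4^(4^m) - 1)).filter (fun m' => 1 ≤ m' ∧ 4^(4^m') ≤ 4^(4^m) - 1))
      = Finset.Icc 1 (m - 1) := by
    ext m'
    simp only [Finset.mem_filter, Finset.mem_Icc]
    constructor
    · rintro ⟨_, h1, h2⟩
      refine ⟨h1, ?_⟩
      have : 4^(4^m') < 4^(4^m) := by omega
      have := fsm.lt_iff_lt.mp this
      omega
    · rintro ⟨h1, h2⟩
      have hlt : m' < m := by omega
      have h3 : 4^(4^m') < 4^(4^m) := fsm hlt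
      exact ⟨⟨h1, by have := le_f m'; omega⟩, h1, by omega⟩
  rw [this, Nat.card_Icc]; omega

lemma negCookieCount_mono : Monotone negCookieCount := by
  intro a b h
  exact Finset.card_le_card (Finset.filter_subset_filter _ (Finset.Icc_subset_Icc_right h))

lemma negCookieCount_lower (x C : ℕ) (hC : negCookieCount x = C) (h1 : 1 ≤ C) :
    4^(4^C) ≤ x := by
  by_contra h
  push_neg at h
  rw [negCookieCount_eq] at hC
  have hsub : ((Finset.Icc 1 x).filter (fun m => 1 ≤ m ∧ 4^(4^m) ≤ x)) ⊆ Finset.Icc 1 (C-1) := by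
    intro m hm
    simp only [Finset.mem_filter, Finset.mem_Icc] at hm ⊢
    refine ⟨hm.2.1, ?_⟩
    have : m < C := by
      by_contra hc
      push_neg at hc
      exact absurd (le_trans (fsm.monotone hc) hm.2.2) (not_le.mpr h)
    omega
  have := Finset.card_le_card hsub
  rw [hC, Nat.card_Icc] at this
  omega

lemma delta_eq (x : ℕ) (hx : 3 ≤ x) :
    ∑ k ∈ Finset.range x, (2 * cookieP (k+1) - 1) = 1 + ((1:ℝ)/2)^(negCookieCount x) := by
  induction x, hx using Nat.le_induction with
  | base =>
    have h1 : cookieP 1 = 5/6 := by rw [cookieP, if_pos (by omega)]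
    have h2 : cookieP 2 = 5/6 := by rw [cookieP, if_pos (by omega)]
    have h3 : cookieP 3 = 5/6 := by rw [cookieP, if_pos (by omega)]
    have hc : negCookieCount 3 = 0 := by
      rw [negCookieCount]
      apply Finset.card_eq_zero.mpr
      apply Finset.filter_eq_empty_iff.mpr
      intro j hj
      simp only [Finset.mem_Icc] at hj
      rw [cookieP_lt_iff]
      rintro ⟨m, hm, rfl⟩
      have := f_ge m hm; omega
    rw [hc]
    rw [Finset.sum_range_succ, Finset.sum_range_succ, Finset.sum_range_succ,
      Finset.sum_range_zero, h1, h2, h3]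
    norm_num
  | succ x hx ih =>
    rw [Finset.sum_range_succ, ih]
    by_cases hc : cookieP (x+1) < 1/2
    · obtain ⟨m, hm, hxm⟩ := (cookieP_lt_iff (x+1)).mp hc
      have hcP : cookieP (x+1) = 1/2 - (1/2)^(m+1) := by rw [hxm, cookieP_special m hm]
      have hC1 : negCookieCount (x+1) = m := by rw [hxm, negCookieCount_special m hm]
      have hC0 : negCookieCount x = m - 1 := by
        have : x = 4^(4^m) - 1 := by omega
        rw [this, negCookieCount_special_pred m hm]
      obtain ⟨m', rfl⟩ : ∃ m', m = m' + 1 := ⟨m - 1, by omega⟩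
      rw [hcP, hC1, hC0]
      simp only [Nat.add_sub_cancel]
      ring
    · have hC : negCookieCount (x+1) = negCookieCount x := by
        rw [negCookieCount, negCookieCount]
        have : Finset.Icc 1 (x+1) = insert (x+1) (Finset.Icc 1 x) := by
          ext j; simp only [Finset.mem_Icc, Finset.mem_insert]; omega
        rw [this, Finset.filter_insert, if_neg hc]
      rw [hC, cookieP_eq_half (x+1) (by omega) hc]
      ring

lemma key_bound (n : ℕ) (hn2 : 2 ≤ n)
    (hn : Real.log 3 + Real.log n ≤ Real.log 4 * Real.log n)
    (hlogn : 1 ≤ Real.log n) :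
    1 / Real.sqrt (Real.log n) ≤ ((1:ℝ)/2)^(negCookieCount (3*n)) := by
  have hsq1 : 1 ≤ Real.sqrt (Real.log n) := by
    rw [show (1:ℝ) = Real.sqrt 1 by simp]
    exact Real.sqrt_le_sqrt hlogn
  set C := negCookieCount (3*n) with hC
  rcases Nat.eq_zero_or_pos C with h0 | hpos
  · rw [h0, pow_zero]
    rw [div_le_one (by linarith)]
    exact hsq1
  · have h4 : 4^(4^C) ≤ 3*n := negCookieCount_lower _ _ rfl hpos
    have h4' : ((4:ℝ))^((4:ℕ)^C) ≤ 3*(n:ℝ) := by exact_mod_cast h4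
    have hnpos : (0:ℝ) < n := by exact_mod_cast Nat.lt_of_lt_of_le (by norm_num) hn2
    have hlog3n : Real.log (3*(n:ℝ)) = Real.log 3 + Real.log n :=
      Real.log_mul (by norm_num) (ne_of_gt hnpos)
    have hlog4pos : (0:ℝ) < Real.log 4 := Real.log_pos (by norm_num)
    have hlogle : (((4:ℕ)^C : ℕ) : ℝ) * Real.log 4 ≤ Real.log (3*(n:ℝ)) := by
      have h := Real.log_le_log (by positivity) h4'
      rwa [Real.log_pow] at h
    have h4C : ((4:ℝ))^C ≤ Real.log n := by
      have hc : (((4:ℕ)^C : ℕ) : ℝ) = (4:ℝ)^C := by push_cast; ring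
      rw [hc, hlog3n] at hlogle
      nlinarith [pow_pos (show (0:ℝ)<4 by norm_num) C]
    have h2C : (2:ℝ)^C ≤ Real.sqrt (Real.log n) := by
      have hsq : ((2:ℝ)^C)^2 = (4:ℝ)^C := by
        rw [← pow_mul, show (4:ℝ)=2^2 by norm_num, ← pow_mul]
        ring_nf
      rw [show (2:ℝ)^C = Real.sqrt (((2:ℝ)^C)^2) from (Real.sqrt_sq (by positivity)).symm, hsq]
      exact Real.sqrt_le_sqrt h4C
    rw [div_pow, one_pow, div_le_div_iff₀ (by positivity) (by positivity)]
    nlinarith [h2C]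

theorem transient_example_rho_lower_bound
    {Ω : Type*} [MeasurableSpace Ω] (μ : Measure Ω) [IsProbabilityMeasure μ]
    (ξ : ℕ → Ω → ℝ) (hmeas : ∀ i, Measurable (ξ i))
    (hval : ∀ i ω, ξ i ω = 0 ∨ ξ i ω = 1)
    (hind : iIndepFun ξ μ)
    (hmean : ∀ i, ∫ ω, ξ i ω ∂μ = cookieP (i + 1))
    (T : ℕ → Ω → ℕ) (hTmeas : ∀ n, Measurable (T n))
    (hT : ∀ n ω, T n ω = sInf {k : ℕ | ∑ i ∈ Finset.range k, (1 - ξ i ω) = (n:ℝ)})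
    (hfin : ∀ n : ℕ, ∀ᵐ ω ∂μ, ∃ k : ℕ, ∑ i ∈ Finset.range k, (1 - ξ i ω) = (n:ℝ))
    (hTint : ∀ n, Integrable (fun ω => (T n ω : ℝ)) μ) :
    (∀ n : ℕ, 3 < n →
      (∫ ω, (∑ k ∈ Finset.range (T n ω), (2 * cookieP (k + 1) - 1)) ∂μ) - 1 =
        ∫ ω, ((1:ℝ)/2)^(negCookieCount (T n ω)) ∂μ) ∧
    ∀ᶠ n : ℕ in atTop,
      (1 / Real.sqrt (Real.log n)) * (μ {ω | T n ω ≤ 3 * n}).toReal ≤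
        (∫ ω, (∑ k ∈ Finset.range (T n ω), (2 * cookieP (k + 1) - 1)) ∂μ) - 1 := by
  have gmeas : ∀ n, Measurable (fun ω => ((1:ℝ)/2)^(negCookieCount (T n ω))) := fun n =>
    (measurable_from_top : Measurable fun k : ℕ => ((1:ℝ)/2)^(negCookieCount k)).comp (hTmeas n)
  have gint : ∀ n, Integrable (fun ω => ((1:ℝ)/2)^(negCookieCount (T n ω))) μ := by
    intro n
    apply Integrable.mono' (integrable_const (1:ℝ)) (gmeas n).aestronglyMeasurable
    filter_upwards with ω
    rw [Real.norm_eq_abs, abs_of_nonneg (by positivity)]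
    exact pow_le_one₀ (by norm_num) (by norm_num)
  have hae : ∀ n : ℕ, 3 < n → ∀ᵐ ω ∂μ,
      (∑ k ∈ Finset.range (T n ω), (2 * cookieP (k + 1) - 1))
        = 1 + ((1:ℝ)/2)^(negCookieCount (T n ω)) := by
    intro n hn
    filter_upwards [hfin n] with ω hω
    have hmem : T n ω ∈ {k : ℕ | ∑ i ∈ Finset.range k, (1 - ξ i ω) = (n:ℝ)} := by
      rw [hT n ω]; exact Nat.sInf_mem hω
    have hle : (n:ℝ) ≤ (T n ω : ℝ) := by
      calc (n:ℝ) = ∑ i ∈ Finset.range (T n ω), (1 - ξ i ω) := hmem.symm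
      _ ≤ ∑ i ∈ Finset.range (T n ω), 1 := by
          apply Finset.sum_le_sum
          intro i _
          rcases hval i ω with h | h <;> rw [h] <;> norm_num
      _ = (T n ω : ℝ) := by simp
    have h3 : 3 ≤ T n ω := by
      have := Nat.cast_le.mp hle
      omega
    exact delta_eq _ h3
  have part1 : ∀ n : ℕ, 3 < n →
      (∫ ω, (∑ k ∈ Finset.range (T n ω), (2 * cookieP (k + 1) - 1)) ∂μ) - 1 =
        ∫ ω, ((1:ℝ)/2)^(negCookieCount (T n ω)) ∂μ := by
    intro n hn
    rw [integral_congr_ae (hae n hn), integral_add (integrable_const 1) (gint n),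
      integral_const]
    simp [measure_univ]
  refine ⟨part1, ?_⟩
  have hlog41 : (1:ℝ) < Real.log 4 := by
    have h1 : Real.exp 1 < 4 := lt_trans Real.exp_one_lt_d9 (by norm_num)
    have := Real.log_lt_log (Real.exp_pos 1) h1
    rwa [Real.log_exp] at this
  have hlogtend : Tendsto (fun n : ℕ => Real.log n) atTop atTop :=
    Real.tendsto_log_atTop.comp tendsto_natCast_atTop_atTop
  have h2 : ∀ᶠ n : ℕ in atTop, 1 ≤ Real.log n := hlogtend.eventually_ge_atTop 1
  have h3 : ∀ᶠ n : ℕ in atTop, Real.log 3 / (Real.log 4 - 1) ≤ Real.log n :=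
    hlogtend.eventually_ge_atTop _
  filter_upwards [eventually_gt_atTop 3, h2, h3] with n hn hlog1 hlog3
  have hlogineq : Real.log 3 + Real.log n ≤ Real.log 4 * Real.log n := by
    rw [div_le_iff₀ (by linarith)] at hlog3
    nlinarith
  rw [part1 n hn]
  have hA : MeasurableSet {ω | T n ω ≤ 3 * n} := by
    have : {ω | T n ω ≤ 3 * n} = (T n) ⁻¹' (Set.Iic (3 * n)) := rfl
    rw [this]
    exact hTmeas n MeasurableSpace.measurableSet_top
  set c := 1 / Real.sqrt (Real.log n) with hc
  have hcb : c ≤ ((1:ℝ)/2)^(negCookieCount (3*n)) := key_bound n (by omega) hlogineq hlog1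
  have hind_eq : ∫ ω, Set.indicator {ω | T n ω ≤ 3 * n} (fun _ => c) ω ∂μ
      = c * (μ {ω | T n ω ≤ 3 * n}).toReal := by
    rw [integral_indicator_const c hA]
    rw [smul_eq_mul, mul_comm, measureReal_def]
  rw [← hind_eq]
  apply integral_mono ((integrable_const c).indicator hA) (gint n)
  intro ω
  by_cases hω : ω ∈ {ω | T n ω ≤ 3 * n}
  · rw [Set.indicator_of_mem hω]
    refine le_trans hcb ?_
    exact pow_le_pow_of_le_one (by norm_num) (by norm_num) (negCookieCount_mono hω)
  · rw [Set.indicator_of_notMem hω]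
    positivity
end
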